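/- arXiv:math/0306218 — 4 statements merged into one kernel-verified Lean document; each statement's English description precedes it below -/
import Mathlib

section
/- Let P and P' be sequences of positive reals with φ_j(P,P) = Q_j and φ_j(P',P') = Q_j for all j ≥ 1 (all values finite), and suppose ln P'_k − ln P_k → 0 as k → ∞. Then P = P', i.e. P_k = P'_k for all k. -/
open Filter Asymptotics MeasureTheory
open scoped ENNReal Topology

/-- `Theta θ E' E` is the argument of the complex number `E' + E·e^{iθ}`;
for `0 < θ < π` and `E', E > 0` it lies in `(0, θ)` and equals
`arctan (sin θ / (E'/E + cos θ))` with the branch taken in `(0, θ)`. -/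
noncomputable def Theta (θ E' E : ℝ) : ℝ :=
  Complex.arg ((E' : ℂ) + (E : ℂ) * Complex.exp (θ * Complex.I))

/-- `phi θ X Y j = (1/π) · ∑_{k ≥ 1} Θ(X_k, Y_j) ∈ (0, ∞]`, where sequences are
indexed by `ℕ` and only the values at indices `k ≥ 1` are used. -/
noncomputable def phi (θ : ℝ) (X Y : ℕ → ℝ) (j : ℕ) : ℝ≥0∞ :=
  ENNReal.ofReal (1 / Real.pi) * ∑' k : ℕ, ENNReal.ofReal (Theta θ (X (k + 1)) (Y j))

/-- `Pker θ E E' = E·E' / (E² + 2·cos θ·E·E' + E'²)`. -/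
noncomputable def Pker (θ E E' : ℝ) : ℝ :=
  E * E' / (E ^ 2 + 2 * Real.cos θ * E * E' + E' ^ 2)

/-- The drift `D_α = (1/π) ∫_0^∞ Θ(s^α, 1) ds`. -/
noncomputable def Drift (θ α : ℝ) : ℝ :=
  (1 / Real.pi) * ∫ s in Set.Ioi (0 : ℝ), Theta θ (s ^ α) 1

/-- `S_ε = ∫_0^∞ s^{-ε} / (s^{α_θ} + 2 cos θ + s^{-α_θ}) ds` with `α_θ = 1 + θ/π`. -/
noncomputable def Sfun (θ ε : ℝ) : ℝ :=
  ∫ s in Set.Ioi (0 : ℝ), s ^ (-ε) /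
    (s ^ (1 + θ / Real.pi) + 2 * Real.cos θ + s ^ (-(1 + θ / Real.pi)))

-- rewrite Theta as arg of explicit complex number
lemma theta_eq (θ E' E : ℝ) :
    Theta θ E' E = Complex.arg ⟨E' + E * Real.cos θ, E * Real.sin θ⟩ := by
  unfold Theta
  congr 1
  apply Complex.ext <;>
    simp [Complex.exp_mul_I, Complex.ext_iff, Complex.cos_ofReal_re, Complex.sin_ofReal_re,
      Complex.add_re, Complex.add_im, Complex.mul_re, Complex.mul_im]

-- x ↦ x / sqrt (x^2 + y^2) is strictly mono for y > 0
lemma ratio_strictMono {y : ℝ} (hy : 0 < y) {a b : ℝ} (hab : a < b) :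
    a / Real.sqrt (a ^ 2 + y ^ 2) < b / Real.sqrt (b ^ 2 + y ^ 2) := by
  have ha : (0:ℝ) < Real.sqrt (a ^ 2 + y ^ 2) := Real.sqrt_pos.2 (by positivity)
  have hb : (0:ℝ) < Real.sqrt (b ^ 2 + y ^ 2) := Real.sqrt_pos.2 (by positivity)
  rw [div_lt_div_iff₀ ha hb]
  have hA : Real.sqrt (a ^ 2 + y ^ 2) ^ 2 = a ^ 2 + y ^ 2 :=
    Real.sq_sqrt (by positivity)
  have hB : Real.sqrt (b ^ 2 + y ^ 2) ^ 2 = b ^ 2 + y ^ 2 :=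
    Real.sq_sqrt (by positivity)
  rcases le_or_gt 0 a with h0a | h0a
  · -- 0 ≤ a < b
    have hb0 : 0 < b := lt_of_le_of_lt h0a hab
    refine lt_of_pow_lt_pow_left₀ 2 (by positivity) ?_
    rw [mul_pow, mul_pow, hA, hB]
    have h2 : a ^ 2 < b ^ 2 := by nlinarith
    nlinarith [mul_lt_mul_of_pos_right h2 (pow_pos hy 2)]
  · rcases le_or_gt b 0 with h0b | h0b
    · -- a < b ≤ 0
      have key : -b * Real.sqrt (a ^ 2 + y ^ 2) < -a * Real.sqrt (b ^ 2 + y ^ 2) := by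
        refine lt_of_pow_lt_pow_left₀ 2
          (mul_nonneg (by linarith) hb.le) ?_
        rw [mul_pow, mul_pow, hA, hB]
        have h2 : b ^ 2 < a ^ 2 := by nlinarith
        nlinarith [mul_lt_mul_of_pos_right h2 (pow_pos hy 2)]
      nlinarith
    · -- a < 0 < b
      have h1 : a * Real.sqrt (b ^ 2 + y ^ 2) < 0 := mul_neg_of_neg_of_pos h0a hb
      have h2 : 0 < b * Real.sqrt (a ^ 2 + y ^ 2) := mul_pos h0b ha
      linarith

-- arg is strictly antitone in the real part, for fixed positive imaginary part
lemma arg_strictAnti {y : ℝ} (hy : 0 < y) {a b : ℝ} (hab : a < b) :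
    Complex.arg ⟨b, y⟩ < Complex.arg ⟨a, y⟩ := by
  have him : ∀ x : ℝ, (Complex.mk x y).im = y := fun x => rfl
  rw [Complex.arg_of_im_pos (by rw [him]; exact hy),
      Complex.arg_of_im_pos (by rw [him]; exact hy)]
  have habs : ∀ x : ℝ, ‖(⟨x, y⟩ : ℂ)‖ = Real.sqrt (x ^ 2 + y ^ 2) := by
    intro x
    rw [Complex.norm_def, Complex.normSq_mk]
    ring_nf
  rw [habs, habs]
  have key := ratio_strictMono hy hab
  have hmem : ∀ x : ℝ, x / Real.sqrt (x ^ 2 + y ^ 2) ∈ Set.Icc (-1 : ℝ) 1 := by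
    intro x
    have hs : (0:ℝ) < Real.sqrt (x ^ 2 + y ^ 2) := Real.sqrt_pos.2 (by positivity)
    have hx : |x| ≤ Real.sqrt (x ^ 2 + y ^ 2) := by
      rw [← Real.sqrt_sq_eq_abs]
      exact Real.sqrt_le_sqrt (by nlinarith)
    constructor
    · rw [neg_le, ← neg_div]
      rw [div_le_one hs]
      calc -x ≤ |x| := neg_le_abs x
        _ ≤ _ := hx
    · rw [div_le_one hs]
      calc x ≤ |x| := le_abs_self x
        _ ≤ _ := hx
  exact Real.strictAntiOn_arccos (hmem a) (hmem b) key

lemma theta_anti {θ : ℝ} (hθ : 0 < θ) (hθπ : θ < Real.pi) {E a b : ℝ} (hE : 0 < E)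
    (hab : a < b) : Theta θ b E < Theta θ a E := by
  rw [theta_eq, theta_eq]
  exact arg_strictAnti (mul_pos hE (Real.sin_pos_of_pos_of_lt_pi hθ hθπ))
    (by linarith)

lemma theta_pos {θ : ℝ} (hθ : 0 < θ) (hθπ : θ < Real.pi) {E' E : ℝ} (hE : 0 < E) :
    0 < Theta θ E' E := by
  rw [theta_eq]
  have him : (Complex.mk (E' + E * Real.cos θ) (E * Real.sin θ)).im
      = E * Real.sin θ := rfl
  have hy : 0 < E * Real.sin θ := mul_pos hE (Real.sin_pos_of_pos_of_lt_pi hθ hθπ)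
  refine lt_of_le_of_ne ?_ ?_
  · exact Complex.arg_nonneg_iff.2 (by rw [him]; exact hy.le)
  · intro h
    have := Complex.arg_eq_zero_iff.1 h.symm
    rw [him] at this
    exact hy.ne' this.2

lemma theta_scale {θ : ℝ} {c a b : ℝ} (hc : 0 < c) :
    Theta θ (c * a) (c * b) = Theta θ a b := by
  unfold Theta
  rw [show ((c * a : ℝ) : ℂ) + ((c * b : ℝ) : ℂ) * Complex.exp (θ * Complex.I)
      = (c : ℝ) * ((a : ℝ) + (b : ℝ) * Complex.exp (θ * Complex.I)) by push_cast; ring]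
  exact Complex.arg_real_mul _ hc


lemma key_le (θ : ℝ) (hθ : 0 < θ) (hθπ : θ < Real.pi)
    (Q : ℕ → ℝ)
    (P P' : ℕ → ℝ) (hPpos : ∀ k, 1 ≤ k → 0 < P k) (hP'pos : ∀ k, 1 ≤ k → 0 < P' k)
    (hfix : ∀ j, 1 ≤ j → phi θ P P j = ENNReal.ofReal (Q j))
    (hfix' : ∀ j, 1 ≤ j → phi θ P' P' j = ENNReal.ofReal (Q j))
    (hlim : Tendsto (fun k : ℕ => Real.log (P' k) - Real.log (P k)) atTop (nhds 0)) :
    ∀ k, 1 ≤ k → P' k ≤ P k := by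
  by_contra h
  push_neg at h
  obtain ⟨j0, hj0, hlt⟩ := h
  set d : ℕ → ℝ := fun k => Real.log (P' k) - Real.log (P k) with hd
  have hdj0 : 0 < d j0 := sub_pos.2 (Real.log_lt_log (hPpos j0 hj0) hlt)
  have hev : ∀ᶠ k in atTop, d k < d j0 := hlim.eventually (gt_mem_nhds hdj0)
  obtain ⟨N, hN⟩ := eventually_atTop.1 hev
  have hj0N : j0 < N := by
    by_contra hc
    exact absurd (hN j0 (le_of_not_gt hc)) (lt_irrefl _)
  set F : Finset ℕ := (Finset.range N).filter (fun k => 1 ≤ k) with hF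
  have hj0F : j0 ∈ F := Finset.mem_filter.2 ⟨Finset.mem_range.2 hj0N, hj0⟩
  obtain ⟨j, hjF, hjmax⟩ := F.exists_max_image d ⟨j0, hj0F⟩
  have hj1 : 1 ≤ j := (Finset.mem_filter.1 hjF).2
  have hdj : 0 < d j := lt_of_lt_of_le hdj0 (hjmax j0 hj0F)
  have hmax : ∀ k, 1 ≤ k → d k ≤ d j := by
    intro k hk
    by_cases hkN : k < N
    · exact hjmax k (Finset.mem_filter.2 ⟨Finset.mem_range.2 hkN, hk⟩)
    · exact le_of_lt (lt_of_lt_of_le (hN k (le_of_not_gt hkN)) (hjmax j0 hj0F))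
  have hPj := hPpos j hj1
  have hP'j := hP'pos j hj1
  set c : ℝ := P' j / P j with hc
  have hc0 : 0 < c := div_pos hP'j hPj
  have hlogc : Real.log c = d j := by
    rw [hc, Real.log_div hP'j.ne' hPj.ne']
  have hcPj : c * P j = P' j := div_mul_cancel₀ _ hPj.ne'
  -- from d k ≤ d j get P' k ≤ c * P k
  have hck : ∀ k, 1 ≤ k → P' k ≤ c * P k := by
    intro k hk
    have h1 : Real.log (P' k) ≤ Real.log (c * P k) := by
      rw [Real.log_mul hc0.ne' (hPpos k hk).ne', hlogc]
      have h2 := hmax k hk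
      have hdk' : d k = Real.log (P' k) - Real.log (P k) := rfl
      have hdj' : d j = Real.log (P' j) - Real.log (P j) := rfl
      rw [hdk', hdj'] at h2
      linarith
    exact (Real.log_le_log_iff (hP'pos k hk) (mul_pos hc0 (hPpos k hk))).1 h1
  have hcklt : ∀ k, 1 ≤ k → d k < d j → P' k < c * P k := by
    intro k hk hdk
    have h1 : Real.log (P' k) < Real.log (c * P k) := by
      rw [Real.log_mul hc0.ne' (hPpos k hk).ne', hlogc]
      have hdk' : d k = Real.log (P' k) - Real.log (P k) := rfl
      have hdj' : d j = Real.log (P' j) - Real.log (P j) := rfl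
      rw [hdk', hdj'] at hdk
      linarith
    exact (Real.log_lt_log_iff (hP'pos k hk) (mul_pos hc0 (hPpos k hk))).1 h1
  -- termwise comparison of Theta
  set f : ℕ → ℝ≥0∞ := fun k => ENNReal.ofReal (Theta θ (P (k + 1)) (P j)) with hf
  set g : ℕ → ℝ≥0∞ := fun k => ENNReal.ofReal (Theta θ (P' (k + 1)) (P' j)) with hg
  have hfg_eq : ∀ k : ℕ, Theta θ (P (k + 1)) (P j) = Theta θ (c * P (k + 1)) (P' j) := by
    intro k
    rw [← hcPj, theta_scale hc0]
  have hle : ∀ k : ℕ, f k ≤ g k := by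
    intro k
    apply ENNReal.ofReal_le_ofReal
    rw [hfg_eq k]
    rcases eq_or_lt_of_le (hck (k + 1) (Nat.le_add_left 1 k)) with heq | hlt'
    · rw [heq]
    · exact (theta_anti hθ hθπ hP'j hlt').le
  have hstrict : f N < g N := by
    have hdN : d (N + 1) < d j :=
      lt_of_lt_of_le (hN (N + 1) (Nat.le_succ N)) (hjmax j0 hj0F)
    have hlt' : P' (N + 1) < c * P (N + 1) := hcklt (N + 1) (Nat.le_add_left 1 N) hdN
    rw [hf, hg]
    simp only
    rw [hfg_eq N]
    rw [ENNReal.ofReal_lt_ofReal_iff (theta_pos hθ hθπ hP'j)]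
    exact theta_anti hθ hθπ hP'j hlt'
  -- the two sums are equal and finite
  have h1 := hfix j hj1
  have h2 := hfix' j hj1
  unfold phi at h1 h2
  have hπ0 : ENNReal.ofReal (1 / Real.pi) ≠ 0 := by
    exact (ENNReal.ofReal_pos.2 (by positivity)).ne'
  have hπt : ENNReal.ofReal (1 / Real.pi) ≠ ⊤ := ENNReal.ofReal_ne_top
  have hST : ∑' k, f k = ∑' k, g k := by
    have := h1.trans h2.symm
    exact (ENNReal.mul_right_inj hπ0 hπt).1 this
  have hSfin : ∑' k, f k ≠ ⊤ := by
    intro hT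
    rw [hT, ENNReal.mul_top hπ0] at h1
    exact ENNReal.ofReal_ne_top h1.symm
  exact absurd hST (ne_of_lt (ENNReal.tsum_lt_tsum hSfin hle hstrict))

theorem stmt_2 (θ : ℝ) (hθ : 0 < θ) (hθπ : θ < Real.pi)
    (Q : ℕ → ℝ) (hQpos : ∀ k, 1 ≤ k → 0 < Q k)
    (P P' : ℕ → ℝ) (hPpos : ∀ k, 1 ≤ k → 0 < P k) (hP'pos : ∀ k, 1 ≤ k → 0 < P' k)
    (hfix : ∀ j, 1 ≤ j → phi θ P P j = ENNReal.ofReal (Q j))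
    (hfix' : ∀ j, 1 ≤ j → phi θ P' P' j = ENNReal.ofReal (Q j))
    (hlim : Tendsto (fun k : ℕ => Real.log (P' k) - Real.log (P k)) atTop (nhds 0)) :
    ∀ k, 1 ≤ k → P k = P' k := by
  have hlim' : Tendsto (fun k : ℕ => Real.log (P k) - Real.log (P' k)) atTop (nhds 0) := by
    have := hlim.neg
    simpa using this
  intro k hk
  exact le_antisymm
    (key_le θ hθ hθπ Q P' P hP'pos hPpos hfix' hfix hlim' k hk)
    (key_le θ hθ hθπ Q P P' hPpos hP'pos hfix hfix' hlim k hk)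
end

section
/- Suppose X and Y are sequences of positive reals with φ_j(X,Y) = Q_j < ∞ for all j ≥ 1, and X' is a sequence of positive reals with c := sup_{k≥1} |ln X'_k − ln X_k| < ∞. Then there exists a sequence Y' of positive reals with φ_j(X',Y') = Q_j for all j ≥ 1, and moreover sup_{j≥1} |ln Y'_j − ln Y_j| ≤ c. -/
open Filter Asymptotics MeasureTheory
open scoped ENNReal Topology

namespace ThetaAux

lemma zre (θ E' E : ℝ) :
    ((E' : ℂ) + (E : ℂ) * Complex.exp (θ * Complex.I)).re = E' + E * Real.cos θ := by
  simp [Complex.add_re, Complex.mul_re, Complex.exp_ofReal_mul_I_re, Complex.exp_ofReal_mul_I_im]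

lemma zim (θ E' E : ℝ) :
    ((E' : ℂ) + (E : ℂ) * Complex.exp (θ * Complex.I)).im = E * Real.sin θ := by
  simp [Complex.add_im, Complex.mul_im, Complex.exp_ofReal_mul_I_re, Complex.exp_ofReal_mul_I_im]

lemma div_abs_eq {z : ℂ} (hz : 0 < z.im) :
    z.re / ‖z‖ = Real.sin (Real.arctan (z.re / z.im)) := by
  rw [Real.sin_arctan]
  have h0 : (1 : ℝ) + (z.re / z.im) ^ 2 = (z.re ^ 2 + z.im ^ 2) / z.im ^ 2 := by
    field_simp; ring
  have h1 : ‖z‖ = Real.sqrt (z.re ^ 2 + z.im ^ 2) := by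
    rw [Complex.norm_def, Complex.normSq_apply]; ring_nf
  rw [h0, h1, Real.sqrt_div' _ (sq_nonneg z.im), Real.sqrt_sq hz.le]
  have hs : 0 < Real.sqrt (z.re ^ 2 + z.im ^ 2) := Real.sqrt_pos.2 (by positivity)
  field_simp

end ThetaAux

namespace ThetaAux2
open ThetaAux

lemma arg_mem {z : ℂ} (hz : 0 < z.im) : Complex.arg z ∈ Set.Icc 0 Real.pi :=
  ⟨Complex.arg_nonneg_iff.2 hz.le, Complex.arg_le_pi z⟩

lemma arg_le_arg_iff {z w : ℂ} (hz : 0 < z.im) (hw : 0 < w.im) :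
    Complex.arg z ≤ Complex.arg w ↔ w.re * z.im ≤ z.re * w.im := by
  have hz0 : z ≠ 0 := fun h => by simp [h] at hz
  have hw0 : w ≠ 0 := fun h => by simp [h] at hw
  rw [← Real.strictAntiOn_cos.le_iff_ge (arg_mem hw) (arg_mem hz),
    Complex.cos_arg hz0, Complex.cos_arg hw0, div_abs_eq hz, div_abs_eq hw,
    (Real.strictMonoOn_sin.le_iff_le
      (Set.mem_Icc.2 ⟨(Real.neg_pi_div_two_lt_arctan _).le, (Real.arctan_lt_pi_div_two _).le⟩)
      (Set.mem_Icc.2 ⟨(Real.neg_pi_div_two_lt_arctan _).le, (Real.arctan_lt_pi_div_two _).le⟩)),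
    Real.arctan_strictMono.le_iff_le]
  exact div_le_div_iff₀ hw hz

lemma arg_lt_arg_iff {z w : ℂ} (hz : 0 < z.im) (hw : 0 < w.im) :
    Complex.arg z < Complex.arg w ↔ w.re * z.im < z.re * w.im :=
  lt_iff_lt_of_le_iff_le (arg_le_arg_iff hw hz)

end ThetaAux2

namespace ThetaAux3
open ThetaAux ThetaAux2

variable {θ E E' l : ℝ}

lemma im_pos (hs : 0 < Real.sin θ) (hE : 0 < E) :
    0 < ((E' : ℂ) + (E : ℂ) * Complex.exp (θ * Complex.I)).im := by
  rw [zim]; positivity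

lemma theta_nonneg (hs : 0 < Real.sin θ) (hE : 0 < E) : 0 ≤ Theta θ E' E :=
  Complex.arg_nonneg_iff.2 (im_pos hs hE).le

lemma theta_pos (hs : 0 < Real.sin θ) (hE : 0 < E) : 0 < Theta θ E' E := by
  rcases (theta_nonneg hs hE (E' := E')).lt_or_eq with h | h
  · exact h
  · exfalso
    have := (Complex.arg_eq_zero_iff.1 h.symm).2
    rw [zim] at this
    nlinarith

lemma theta_le_theta_iff (hs : 0 < Real.sin θ) {E₁ E₂ E₁' E₂' : ℝ} (h1 : 0 < E₁) (h2 : 0 < E₂) :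
    Theta θ E₁' E₁ ≤ Theta θ E₂' E₂ ↔
      (E₂' + E₂ * Real.cos θ) * (E₁ * Real.sin θ) ≤ (E₁' + E₁ * Real.cos θ) * (E₂ * Real.sin θ) := by
  rw [Theta, Theta, arg_le_arg_iff (im_pos hs h1) (im_pos hs h2), zre, zim, zre, zim]

lemma theta_mono (hs : 0 < Real.sin θ) (hE' : 0 < E') {E₁ E₂ : ℝ} (h1 : 0 < E₁) (h12 : E₁ ≤ E₂) :
    Theta θ E' E₁ ≤ Theta θ E' E₂ := by
  rw [theta_le_theta_iff hs h1 (lt_of_lt_of_le h1 h12)]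
  nlinarith [mul_nonneg (mul_nonneg hE'.le hs.le) (sub_nonneg.2 h12)]

lemma theta_anti (hs : 0 < Real.sin θ) (hE : 0 < E) {E₁' E₂' : ℝ} (h12 : E₁' ≤ E₂') :
    Theta θ E₂' E ≤ Theta θ E₁' E := by
  rw [theta_le_theta_iff hs hE hE]
  nlinarith [mul_nonneg (mul_nonneg (sub_nonneg.2 h12) hE.le) hs.le]

lemma theta_lt (hθ : 0 < θ) (hθπ : θ < Real.pi) (hE' : 0 < E') (hE : 0 < E) :
    Theta θ E' E < θ := by
  have hs : 0 < Real.sin θ := Real.sin_pos_of_pos_of_lt_pi hθ hθπ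
  have harg : Complex.arg ((Real.cos θ : ℂ) + (Real.sin θ : ℂ) * Complex.I) = θ :=
    by rw [Complex.ofReal_cos, Complex.ofReal_sin]
       exact Complex.arg_cos_add_sin_mul_I ⟨by linarith [Real.pi_pos], hθπ.le⟩
  have him : (0:ℝ) < ((Real.cos θ : ℂ) + (Real.sin θ : ℂ) * Complex.I).im := by
    simp [Complex.add_im, Complex.ofReal_im, Complex.mul_im, Complex.ofReal_re, Complex.sin_ofReal_re, hs]
  calc Theta θ E' E < Complex.arg ((Real.cos θ : ℂ) + (Real.sin θ : ℂ) * Complex.I) := by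
        rw [Theta, arg_lt_arg_iff (im_pos hs hE) him]
        simp only [zre, zim, Complex.add_re, Complex.add_im, Complex.ofReal_re, Complex.ofReal_im,
          Complex.mul_re, Complex.mul_im, Complex.I_re, Complex.I_im,
          Complex.exp_ofReal_mul_I_re, Complex.exp_ofReal_mul_I_im]
        ring_nf
        nlinarith [mul_pos hE' hs]
    _ = θ := harg

lemma theta_scale (hl : 0 < l) : Theta θ (l * E') (l * E) = Theta θ E' E := by
  rw [Theta, Theta, show ((l * E' : ℝ) : ℂ) + ((l * E : ℝ) : ℂ) * Complex.exp (θ * Complex.I)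
      = (l : ℝ) * (((E' : ℝ) : ℂ) + ((E : ℝ) : ℂ) * Complex.exp (θ * Complex.I)) by
    push_cast; ring]
  exact Complex.arg_real_mul _ hl

end ThetaAux3

namespace ThetaAux4
open ThetaAux ThetaAux2 ThetaAux3

variable {θ E E' l : ℝ}

lemma abs_sq (θ E' E : ℝ) :
    ‖(E' : ℂ) + (E : ℂ) * Complex.exp (θ * Complex.I)‖ ^ 2
      = (E' + E * Real.cos θ) ^ 2 + (E * Real.sin θ) ^ 2 := by
  rw [Complex.sq_norm, Complex.normSq_apply, zre, zim]; ring

lemma abs_pos' (hs : 0 < Real.sin θ) (hE : 0 < E) :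
    0 < ‖(E' : ℂ) + (E : ℂ) * Complex.exp (θ * Complex.I)‖ := by
  refine norm_pos_iff.mpr fun h => ?_
  have := im_pos (E' := E') hs hE
  rw [h] at this; simp at this

lemma abs_le_add (hE' : 0 ≤ E') (hE : 0 ≤ E) :
    ‖(E' : ℂ) + (E : ℂ) * Complex.exp (θ * Complex.I)‖ ≤ E' + E := by
  calc ‖(E' : ℂ) + (E : ℂ) * Complex.exp (θ * Complex.I)‖
      ≤ ‖(E' : ℂ)‖ + ‖(E : ℂ) * Complex.exp (θ * Complex.I)‖ :=
        norm_add_le _ _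
    _ = E' + E := by
        rw [norm_mul, Complex.norm_exp_ofReal_mul_I, Complex.norm_real, Complex.norm_real,
          Real.norm_of_nonneg hE', Real.norm_of_nonneg hE, mul_one]

lemma le_abs_left (hs : 0 < Real.sin θ) (hE' : 0 ≤ E') (hE : 0 < E) :
    E' * Real.sin θ ≤ ‖(E' : ℂ) + (E : ℂ) * Complex.exp (θ * Complex.I)‖ := by
  have h1 := abs_sq θ E' E
  have h2 := (abs_pos' (E' := E') hs hE).le
  have hsc := Real.sin_sq_add_cos_sq θ
  rw [← pow_le_pow_iff_left₀ (by positivity) h2 two_ne_zero, h1]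
  have key : (E' + E * Real.cos θ) ^ 2 + (E * Real.sin θ) ^ 2 - (E' * Real.sin θ) ^ 2
      = (E' * Real.cos θ + E) ^ 2 := by linear_combination (E ^ 2 - E' ^ 2) * hsc
  nlinarith [sq_nonneg (E' * Real.cos θ + E)]

lemma le_abs_right (hs : 0 < Real.sin θ) (hE : 0 < E) :
    E * Real.sin θ ≤ ‖(E' : ℂ) + (E : ℂ) * Complex.exp (θ * Complex.I)‖ := by
  have := Complex.abs_im_le_norm ((E' : ℂ) + (E : ℂ) * Complex.exp (θ * Complex.I))
  rw [zim] at this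
  exact le_trans (le_abs_self _) this

/-- concavity: `x ∈ [0, θ]` implies `x * sin θ ≤ θ * sin x`. -/
lemma mul_sin_le (hθ : 0 < θ) (hθπ : θ ≤ Real.pi) {x : ℝ} (hx : 0 ≤ x) (hxθ : x ≤ θ) :
    x * Real.sin θ ≤ θ * Real.sin x := by
  have hcc := strictConcaveOn_sin_Icc.concaveOn
  have h0 : (0 : ℝ) ∈ Set.Icc 0 Real.pi := by constructor <;> linarith [Real.pi_pos]
  have hθm : θ ∈ Set.Icc 0 Real.pi := ⟨hθ.le, hθπ⟩
  have key := hcc.2 h0 hθm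
    (show (0:ℝ) ≤ 1 - x / θ by rw [sub_nonneg]; exact div_le_one_of_le₀ hxθ hθ.le)
    (show (0:ℝ) ≤ x / θ by positivity)
    (show (1 - x / θ) + x / θ = 1 by ring)
  simp only [smul_eq_mul, mul_zero, Real.sin_zero, zero_add, mul_zero, zero_add] at key
  rw [div_mul_cancel₀ _ hθ.ne'] at key
  have : x / θ * Real.sin θ ≤ Real.sin x := by linarith
  calc x * Real.sin θ = θ * (x / θ * Real.sin θ) := by field_simp
    _ ≤ θ * Real.sin x := by nlinarith

lemma sin_theta_eq (hs : 0 < Real.sin θ) (hE : 0 < E) :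
    Real.sin (Theta θ E' E) * ‖(E' : ℂ) + (E : ℂ) * Complex.exp (θ * Complex.I)‖
      = E * Real.sin θ := by
  rw [Theta, Complex.sin_arg, zim, div_mul_cancel₀ _ (abs_pos' (E' := E') hs hE).ne']

/-- Growth bound: `Θ(E', l·E) ≤ (2θl / sin²θ) · Θ(E', E)` for `l ≥ 1`. -/
lemma theta_bound (hθ : 0 < θ) (hθπ : θ < Real.pi) (hE' : 0 < E') (hE : 0 < E) (hl : 1 ≤ l) :
    Theta θ E' (l * E) ≤ 2 * θ * l / (Real.sin θ) ^ 2 * Theta θ E' E := by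
  have hs : 0 < Real.sin θ := Real.sin_pos_of_pos_of_lt_pi hθ hθπ
  have hl0 : 0 < l := lt_of_lt_of_le one_pos hl
  set A := ‖(E' : ℂ) + ((l * E : ℝ) : ℂ) * Complex.exp (θ * Complex.I)‖ with hA
  set B := ‖(E' : ℂ) + (E : ℂ) * Complex.exp (θ * Complex.I)‖ with hB
  have hApos : 0 < A := abs_pos' hs (by positivity)
  have hBpos : 0 < B := abs_pos' hs hE
  set Tl := Theta θ E' (l * E) with hTl
  set T := Theta θ E' E with hT
  have hTl0 : 0 ≤ Tl := theta_nonneg hs (by positivity)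
  have hT0 : 0 ≤ T := theta_nonneg hs hE
  -- f1 : Tl * sin θ * A ≤ θ * (l * E * sin θ)
  have e1 : Real.sin Tl * A = l * E * Real.sin θ := sin_theta_eq hs (by positivity)
  have i1 : Tl * Real.sin θ ≤ θ * Real.sin Tl :=
    mul_sin_le hθ hθπ.le hTl0 (theta_lt hθ hθπ hE' (by positivity)).le
  have f1 : Tl * Real.sin θ * A ≤ θ * (l * E * Real.sin θ) := by
    calc Tl * Real.sin θ * A ≤ θ * Real.sin Tl * A := by nlinarith
      _ = θ * (l * E * Real.sin θ) := by rw [mul_assoc, e1]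
  -- f2 : E * sin θ ≤ T * B
  have e2 : Real.sin T * B = E * Real.sin θ := sin_theta_eq hs hE
  have f2 : E * Real.sin θ ≤ T * B := by
    have := Real.sin_le hT0
    nlinarith
  -- f3 : sin θ * B ≤ 2 * A
  have f3 : Real.sin θ * B ≤ 2 * A := by
    have h1 : B ≤ E' + E := abs_le_add hE'.le hE.le
    have h2 : E' * Real.sin θ ≤ A := le_abs_left hs hE'.le (by positivity)
    have h3 : l * E * Real.sin θ ≤ A := le_abs_right hs (by positivity)
    nlinarith [mul_le_mul_of_nonneg_left h1 hs.le,
      mul_nonneg (mul_nonneg (sub_nonneg.2 hl) hE.le) hs.le]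
  rw [div_mul_eq_mul_div, le_div_iff₀ (by positivity : (0:ℝ) < (Real.sin θ) ^ 2)]
  have main : Tl * (Real.sin θ)^2 * A ≤ 2 * θ * l * T * A := by
    nlinarith [mul_le_mul_of_nonneg_right f1 hs.le,
      mul_le_mul_of_nonneg_left f2 (by positivity : (0:ℝ) ≤ θ * l * Real.sin θ),
      mul_le_mul_of_nonneg_left f3 (by positivity : (0:ℝ) ≤ θ * l * T)]
  exact le_of_mul_le_mul_right (by nlinarith) hApos

lemma theta_continuousOn (θ E' : ℝ) (hs : 0 < Real.sin θ) :
    ContinuousOn (fun t : ℝ => Theta θ E' t) {t : ℝ | 0 < t} := by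
  intro t ht
  apply ContinuousAt.continuousWithinAt
  have hg : Continuous (fun t : ℝ => (E' : ℂ) + (t : ℂ) * Complex.exp (θ * Complex.I)) := by
    continuity
  exact (Complex.continuousAt_arg (by
    rw [Complex.mem_slitPlane_iff]
    right
    rw [zim]
    exact (mul_pos ht hs).ne')).comp hg.continuousAt

end ThetaAux4

theorem stmt_6 (θ : ℝ) (hθ : 0 < θ) (hθπ : θ < Real.pi)
    (Q : ℕ → ℝ) (hQpos : ∀ k, 1 ≤ k → 0 < Q k)
    (X Y X' : ℕ → ℝ) (hXpos : ∀ k, 1 ≤ k → 0 < X k) (hYpos : ∀ j, 1 ≤ j → 0 < Y j)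
    (hX'pos : ∀ k, 1 ≤ k → 0 < X' k)
    (hfix : ∀ j, 1 ≤ j → phi θ X Y j = ENNReal.ofReal (Q j))
    (c : ℝ) (hc : ∀ k, 1 ≤ k → |Real.log (X' k) - Real.log (X k)| ≤ c) :
    ∃ Y' : ℕ → ℝ, (∀ j, 1 ≤ j → 0 < Y' j) ∧
      (∀ j, 1 ≤ j → phi θ X' Y' j = ENNReal.ofReal (Q j)) ∧
      ∀ j, 1 ≤ j → |Real.log (Y' j) - Real.log (Y j)| ≤ c := by
  classical
  have hπ : 0 < Real.pi := Real.pi_pos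
  have hs : 0 < Real.sin θ := Real.sin_pos_of_pos_of_lt_pi hθ hθπ
  have hc0 : 0 ≤ c := le_trans (abs_nonneg _) (hc 1 le_rfl)
  have hkp : ∀ k : ℕ, (1 : ℕ) ≤ k + 1 := fun k => Nat.succ_le_succ (Nat.zero_le k)
  have hXp : ∀ k : ℕ, 0 < X (k + 1) := fun k => hXpos _ (hkp k)
  have hX'p : ∀ k : ℕ, 0 < X' (k + 1) := fun k => hX'pos _ (hkp k)
  have habs : ∀ k : ℕ, -c ≤ Real.log (X' (k+1)) - Real.log (X (k+1)) ∧
      Real.log (X' (k+1)) - Real.log (X (k+1)) ≤ c := fun k => abs_le.1 (hc (k+1) (hkp k))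
  have hX'low : ∀ k : ℕ, Real.exp (-c) * X (k+1) ≤ X' (k+1) := by
    intro k
    rw [show Real.exp (-c) * X (k+1) = Real.exp (-c + Real.log (X (k+1))) by
        rw [Real.exp_add, Real.exp_log (hXp k)],
      ← Real.exp_log (hX'p k)]
    exact Real.exp_le_exp.2 (by linarith [(habs k).1])
  have hX'up : ∀ k : ℕ, X (k+1) ≤ Real.exp c * X' (k+1) := by
    intro k
    rw [show Real.exp c * X' (k+1) = Real.exp (c + Real.log (X' (k+1))) by
        rw [Real.exp_add, Real.exp_log (hX'p k)],
      ← Real.exp_log (hXp k)]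
    exact Real.exp_le_exp.2 (by linarith [(habs k).1])
  have hX'le : ∀ k : ℕ, Real.exp (-c) * X' (k+1) ≤ X (k+1) := by
    intro k
    rw [show Real.exp (-c) * X' (k+1) = Real.exp (-c + Real.log (X' (k+1))) by
        rw [Real.exp_add, Real.exp_log (hX'p k)],
      ← Real.exp_log (hXp k)]
    exact Real.exp_le_exp.2 (by linarith [(habs k).2])
  set K : ℝ := 2 * θ * Real.exp (2 * c) / (Real.sin θ) ^ 2 with hK
  have key : ∀ j : ℕ, ∃ t : ℝ, 1 ≤ j → 0 < t ∧
      (ENNReal.ofReal (1 / Real.pi) * ∑' k : ℕ, ENNReal.ofReal (Theta θ (X' (k + 1)) t)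
        = ENNReal.ofReal (Q j)) ∧ |Real.log t - Real.log (Y j)| ≤ c := by
    intro j
    by_cases hj : 1 ≤ j
    swap
    · exact ⟨1, fun h => absurd h hj⟩
    set t0 := Y j with ht0
    have ht0p : 0 < t0 := hYpos j hj
    set a := Real.exp (-c) * t0 with ha
    set b := Real.exp c * t0 with hb
    have hap : 0 < a := by positivity
    have hbp : 0 < b := by positivity
    have hab : a ≤ b := by
      have := Real.exp_le_exp.2 (show -c ≤ c by linarith)
      nlinarith
    set S : ℕ → ℝ := fun k => Theta θ (X (k+1)) t0 with hS
    have hSnn : ∀ k, 0 ≤ S k := fun k => ThetaAux3.theta_nonneg hs ht0p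
    -- extract sum condition
    have hTs : ∑' k : ℕ, ENNReal.ofReal (S k) = ENNReal.ofReal (Real.pi * Q j) := by
      have hfj := hfix j hj
      rw [phi] at hfj
      calc ∑' k : ℕ, ENNReal.ofReal (S k)
          = ENNReal.ofReal Real.pi * (ENNReal.ofReal (1 / Real.pi) *
              ∑' k : ℕ, ENNReal.ofReal (S k)) := by
            rw [← mul_assoc, ← ENNReal.ofReal_mul hπ.le, mul_one_div_cancel hπ.ne',
              ENNReal.ofReal_one, one_mul]
        _ = ENNReal.ofReal Real.pi * ENNReal.ofReal (Q j) := by rw [hfj]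
        _ = ENNReal.ofReal (Real.pi * Q j) := (ENNReal.ofReal_mul hπ.le).symm
    have hSsum : Summable S := by
      have hfin : (∑' k : ℕ, ENNReal.ofReal (S k)) ≠ ⊤ := by
        rw [hTs]; exact ENNReal.ofReal_ne_top
      have := ENNReal.summable_toReal hfin
      simpa [ENNReal.toReal_ofReal (hSnn _)] using this
    have hStsum : ∑' k, S k = Real.pi * Q j := by
      have h1 := ENNReal.tsum_toReal_eq (f := fun k : ℕ => ENNReal.ofReal (S k))
        (fun k => ENNReal.ofReal_ne_top)
      rw [hTs, ENNReal.toReal_ofReal (mul_nonneg hπ.le (hQpos j hj).le)] at h1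
      rw [h1]
      exact tsum_congr fun k => (ENNReal.toReal_ofReal (hSnn k)).symm
    -- dominating bound at b
    have hdomb : ∀ k : ℕ, Theta θ (X' (k+1)) b ≤ K * S k := by
      intro k
      have step1 : Theta θ (X' (k+1)) b ≤ Theta θ (Real.exp (-c) * X (k+1)) b :=
        ThetaAux3.theta_anti hs hbp (hX'low k)
      have step2 : Theta θ (Real.exp (-c) * X (k+1)) b
          = Theta θ (X (k+1)) (Real.exp (2*c) * t0) := by
        rw [← ThetaAux3.theta_scale (Real.exp_pos c) (E' := Real.exp (-c) * X (k+1)) (E := b)]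
        congr 1
        · rw [← mul_assoc, ← Real.exp_add, add_neg_cancel, Real.exp_zero, one_mul]
        · rw [hb, ← mul_assoc, ← Real.exp_add, two_mul]
      have step3 : Theta θ (X (k+1)) (Real.exp (2*c) * t0) ≤ K * S k :=
        ThetaAux4.theta_bound hθ hθπ (hXp k) ht0p (Real.one_le_exp (by positivity))
      calc Theta θ (X' (k+1)) b ≤ _ := step1
        _ = _ := step2
        _ ≤ K * S k := step3
    have hUsum : Summable (fun k : ℕ => K * S k) := hSsum.mul_left K
    have hTbsum : Summable (fun k : ℕ => Theta θ (X' (k+1)) b) :=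
      hUsum.of_nonneg_of_le (fun k => ThetaAux3.theta_nonneg hs hbp) hdomb
    -- endpoint inequalities
    have hFa : (∑' k : ℕ, Theta θ (X' (k+1)) a) ≤ Real.pi * Q j := by
      rw [← hStsum]
      refine Summable.tsum_le_tsum (fun k => ?_) ?_ hSsum
      · have e1 : Theta θ (X' (k+1)) a = Theta θ (Real.exp c * X' (k+1)) t0 := by
          rw [← ThetaAux3.theta_scale (Real.exp_pos c) (E' := X' (k+1)) (E := a)]
          congr 1
          rw [ha, ← mul_assoc, ← Real.exp_add, add_neg_cancel, Real.exp_zero, one_mul]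
        rw [e1]
        exact ThetaAux3.theta_anti hs ht0p (hX'up k)
      · refine hSsum.of_nonneg_of_le (fun k => ThetaAux3.theta_nonneg hs hap) (fun k => ?_)
        have e1 : Theta θ (X' (k+1)) a = Theta θ (Real.exp c * X' (k+1)) t0 := by
          rw [← ThetaAux3.theta_scale (Real.exp_pos c) (E' := X' (k+1)) (E := a)]
          congr 1
          rw [ha, ← mul_assoc, ← Real.exp_add, add_neg_cancel, Real.exp_zero, one_mul]
        rw [e1]
        exact ThetaAux3.theta_anti hs ht0p (hX'up k)
    have hFb : Real.pi * Q j ≤ ∑' k : ℕ, Theta θ (X' (k+1)) b := by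
      rw [← hStsum]
      refine Summable.tsum_le_tsum (fun k => ?_) hSsum hTbsum
      have e1 : Theta θ (X' (k+1)) b = Theta θ (Real.exp (-c) * X' (k+1)) t0 := by
        rw [← ThetaAux3.theta_scale (Real.exp_pos (-c)) (E' := X' (k+1)) (E := b)]
        congr 1
        rw [hb, ← mul_assoc, ← Real.exp_add, neg_add_cancel, Real.exp_zero, one_mul]
      rw [e1]
      exact ThetaAux3.theta_anti hs ht0p (hX'le k)
    -- continuity on Icc a b
    set F : ℝ → ℝ := fun t => ∑' k : ℕ, Theta θ (X' (k+1)) t with hF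
    have hFcont : ContinuousOn F (Set.Icc a b) := by
      refine continuousOn_tsum (f := fun k t => Theta θ (X' (k+1)) t)
        (fun k => ((ThetaAux4.theta_continuousOn θ (X' (k+1)) hs).mono ?_)) hUsum
        (fun k t ht => ?_)
      · intro t ht
        exact lt_of_lt_of_le hap ht.1
      · rw [Real.norm_eq_abs, abs_of_nonneg (ThetaAux3.theta_nonneg hs (lt_of_lt_of_le hap ht.1))]
        calc Theta θ (X' (k+1)) t ≤ Theta θ (X' (k+1)) b :=
              ThetaAux3.theta_mono hs (hX'p k) (lt_of_lt_of_le hap ht.1) ht.2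
          _ ≤ K * S k := hdomb k
    -- IVT
    obtain ⟨t, htmem, htF⟩ := intermediate_value_Icc hab hFcont
      (Set.mem_Icc.2 ⟨hFa, hFb⟩)
    have htp : 0 < t := lt_of_lt_of_le hap htmem.1
    refine ⟨t, fun _ => ⟨htp, ?_, ?_⟩⟩
    · have hsumt : Summable (fun k : ℕ => Theta θ (X' (k+1)) t) := by
        refine hUsum.of_nonneg_of_le (fun k => ThetaAux3.theta_nonneg hs htp) (fun k => ?_)
        calc Theta θ (X' (k+1)) t ≤ Theta θ (X' (k+1)) b :=
              ThetaAux3.theta_mono hs (hX'p k) htp htmem.2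
          _ ≤ K * S k := hdomb k
      have : ∑' k : ℕ, ENNReal.ofReal (Theta θ (X' (k+1)) t)
          = ENNReal.ofReal (Real.pi * Q j) := by
        rw [← ENNReal.ofReal_tsum_of_nonneg (fun k => ThetaAux3.theta_nonneg hs htp) hsumt]
        congr 1
      rw [this, ← ENNReal.ofReal_mul (by positivity : (0:ℝ) ≤ 1 / Real.pi)]
      congr 1
      field_simp
    · have h1 : Real.log a ≤ Real.log t := Real.log_le_log hap htmem.1
      have h2 : Real.log t ≤ Real.log b := Real.log_le_log htp htmem.2
      rw [ha, Real.log_mul (Real.exp_ne_zero _) ht0p.ne', Real.log_exp] at h1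
      rw [hb, Real.log_mul (Real.exp_ne_zero _) ht0p.ne', Real.log_exp] at h2
      rw [abs_le]
      constructor <;> linarith
  choose Y' hY' using key
  exact ⟨Y', fun j hj => (hY' j hj).1, fun j hj => (hY' j hj).2.1, fun j hj => (hY' j hj).2.2⟩
end

section
/- Assume Q_k = k + O(1), let α > 1, and let X, Y be sequences of positive reals with ln X_k = α·ln k + O(1) and φ_j(X,Y) = Q_j for all j. Then limsup_{j→∞} (ln Y_j − α·ln j) ≤ limsup_{k→∞} (ln X_k − α·ln k) − α·ln D_α and liminf_{j→∞} (ln Y_j − α·ln j) ≥ liminf_{k→∞} (ln X_k − α·ln k) − α·ln D_α. -/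
open Filter Asymptotics MeasureTheory
open scoped ENNReal Topology

open Set Real

lemma arg_of_im_pos' {x y : ℝ} (hy : 0 < y) :
    Complex.arg ⟨x, y⟩ = Real.pi / 2 - Real.arctan (x / y) := by
  set t := x / y with ht
  set φ := Real.pi / 2 - Real.arctan t with hφ
  have h1 : Real.arctan t < Real.pi / 2 := Real.arctan_lt_pi_div_two t
  have h2 : -(Real.pi / 2) < Real.arctan t := Real.neg_pi_div_two_lt_arctan t
  have hpi : (0:ℝ) < Real.pi := Real.pi_pos
  have hφmem : φ ∈ Set.Ioc (-Real.pi) Real.pi := by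
    rw [hφ]; constructor <;> [linarith; linarith]
  have hr : (0:ℝ) < Real.sqrt (x ^ 2 + y ^ 2) := by
    apply Real.sqrt_pos.2; positivity
  have hcos : Real.cos φ = Real.sin (Real.arctan t) := by
    rw [hφ, Real.cos_pi_div_two_sub]
  have hsin : Real.sin φ = Real.cos (Real.arctan t) := by
    rw [hφ, Real.sin_pi_div_two_sub]
  have hsq : Real.sqrt (1 + t ^ 2) = Real.sqrt (x ^ 2 + y ^ 2) / y := by
    rw [eq_div_iff hy.ne', ← Real.sqrt_sq hy.le, ← Real.sqrt_mul (by positivity)]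
    congr 1
    field_simp [ht]
    rw [Real.sq_sqrt (sq_nonneg y), ht, div_pow, add_mul, one_mul,
      div_mul_cancel₀ _ (by positivity : y ^ 2 ≠ 0), add_comm]
  have hre : Real.sqrt (x ^ 2 + y ^ 2) * Real.cos φ = x := by
    rw [hcos, Real.sin_arctan, hsq, ht]
    field_simp
  have him : Real.sqrt (x ^ 2 + y ^ 2) * Real.sin φ = y := by
    rw [hsin, Real.cos_arctan, hsq]
    field_simp
  have key : (⟨x, y⟩ : ℂ) =
      (Real.sqrt (x ^ 2 + y ^ 2) : ℝ) * ((Real.cos φ : ℝ) + (Real.sin φ : ℝ) * Complex.I) := by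
    apply Complex.ext <;> simp [Complex.cos_ofReal_re, Complex.sin_ofReal_re, hre, him]
  rw [key, Complex.arg_real_mul _ hr, Complex.ofReal_cos, Complex.ofReal_sin,
    Complex.arg_cos_add_sin_mul_I hφmem]

noncomputable def Tf (θ u : ℝ) : ℝ :=
  Real.pi / 2 - Real.arctan ((u + Real.cos θ) / Real.sin θ)

section Tfsec
variable {θ : ℝ} (hθ : 0 < θ) (hθπ : θ < Real.pi)
include hθ hθπ

lemma sinθpos : 0 < Real.sin θ := Real.sin_pos_of_pos_of_lt_pi hθ hθπ

lemma theta_eq_s11 {E E' : ℝ} (hE : 0 < E) : Theta θ E' E = Tf θ (E' / E) := by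
  have hs := sinθpos hθ hθπ
  have hz : ((E' : ℂ) + (E : ℂ) * Complex.exp (θ * Complex.I)) =
      (⟨E' + E * Real.cos θ, E * Real.sin θ⟩ : ℂ) := by
    rw [show ((θ : ℂ) * Complex.I) = ((θ : ℝ) : ℂ) * Complex.I by norm_num,
      Complex.exp_mul_I]
    apply Complex.ext <;>
      simp [Complex.cos_ofReal_re, Complex.sin_ofReal_re]
  rw [Theta, hz, arg_of_im_pos' (by positivity), Tf]
  congr 2
  field_simp

lemma Tf_antitone : Antitone (Tf θ) := by
  have hs := sinθpos hθ hθπ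
  intro u v huv
  have h : (u + Real.cos θ) / Real.sin θ ≤ (v + Real.cos θ) / Real.sin θ := by
    gcongr
  have := Real.arctan_strictMono.monotone h
  rw [Tf, Tf]
  linarith

omit hθ hθπ in
lemma Tf_pos (u : ℝ) : 0 < Tf θ u := by
  have := Real.arctan_lt_pi_div_two ((u + Real.cos θ) / Real.sin θ)
  rw [Tf]; linarith

omit hθ hθπ in
lemma Tf_le_pi (u : ℝ) : Tf θ u ≤ Real.pi := by
  have := Real.neg_pi_div_two_lt_arctan ((u + Real.cos θ) / Real.sin θ)
  have := Real.pi_pos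
  rw [Tf]; linarith

omit hθ hθπ in
lemma arctan_le_self' {x : ℝ} (hx : 0 ≤ x) : Real.arctan x ≤ x := by
  by_cases h : 0 < x
  · have h1 : 0 ≤ Real.arctan x := by simpa using Real.arctan_strictMono.monotone hx
    have h2 : Real.arctan x < Real.pi / 2 := Real.arctan_lt_pi_div_two x
    calc Real.arctan x ≤ Real.tan (Real.arctan x) := Real.le_tan h1 h2
    _ = x := Real.tan_arctan x
  · simp [show x = 0 by linarith]

lemma Tf_le_decay {u : ℝ} (hu : 0 < u + Real.cos θ) :
    Tf θ u ≤ Real.sin θ / (u + Real.cos θ) := by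
  have hs := sinθpos hθ hθπ
  have ht : 0 < (u + Real.cos θ) / Real.sin θ := by positivity
  have h1 := Real.arctan_inv_of_pos ht
  have h2 : Tf θ u = Real.arctan (Real.sin θ / (u + Real.cos θ)) := by
    rw [Tf, ← h1, inv_div]
  rw [h2]
  exact arctan_le_self' (by positivity)

lemma Tf_continuous : Continuous (Tf θ) := by
  have hs := sinθpos hθ hθπ
  unfold Tf
  exact continuous_const.sub (Real.continuous_arctan.comp (by fun_prop))

variable {α : ℝ} (hα : 1 < α)
include hα

lemma G_anti (c : ℝ) (hc : 0 < c) :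
    AntitoneOn (fun s : ℝ => Tf θ (c * s ^ α)) (Set.Ici (0:ℝ)) := by
  intro u hu v hv huv
  have : c * u ^ α ≤ c * v ^ α := by
    have := Real.rpow_le_rpow hu huv (by linarith : (0:ℝ) ≤ α)
    nlinarith
  exact Tf_antitone hθ hθπ this

omit hα in
lemma G_contOn (c : ℝ) :
    ContinuousOn (fun s : ℝ => Tf θ (c * s ^ α)) (Set.Ioi (0:ℝ)) := by
  apply (Tf_continuous hθ hθπ).comp_continuousOn
  apply ContinuousOn.const_smul ?_ c
  intro x hx
  exact (Real.continuousAt_rpow_const x α (Or.inl (ne_of_gt hx))).continuousWithinAt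

lemma G_integrable (c : ℝ) (hc : 0 < c) :
    IntegrableOn (fun s : ℝ => Tf θ (c * s ^ α)) (Set.Ioi (0:ℝ)) := by
  have hs := sinθpos hθ hθπ
  set b := (2 / c) ^ (α⁻¹) with hb
  have hbpos : 0 < b := Real.rpow_pos_of_pos (by positivity) _
  have hbα : b ^ α = 2 / c := by
    rw [hb, ← Real.rpow_mul (by positivity), inv_mul_cancel₀ (by linarith : α ≠ 0),
      Real.rpow_one]
  have key : ∀ s : ℝ, b ≤ s → 2 ≤ c * s ^ α := by
    intro s hbs
    have h1 : b ^ α ≤ s ^ α := Real.rpow_le_rpow hbpos.le hbs (by linarith)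
    rw [hbα] at h1
    calc (2:ℝ) = c * (2 / c) := by field_simp
    _ ≤ c * s ^ α := by nlinarith
  have hIoc : IntegrableOn (fun s : ℝ => Tf θ (c * s ^ α)) (Set.Ioc 0 b) := by
    apply Integrable.mono' (integrable_const Real.pi)
    · exact (((G_contOn hθ hθπ) c).mono Set.Ioc_subset_Ioi_self).aestronglyMeasurable
        measurableSet_Ioc
    · filter_upwards with s
      rw [Real.norm_eq_abs, abs_of_nonneg (Tf_pos _).le]
      exact Tf_le_pi _
  have hIoi : IntegrableOn (fun s : ℝ => Tf θ (c * s ^ α)) (Set.Ioi b) := by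
    apply Integrable.mono'
      (((integrableOn_Ioi_rpow_of_lt (by linarith : -α < -1) hbpos)).const_mul
        (2 * Real.sin θ / c))
    · exact (((G_contOn hθ hθπ) c).mono (Set.Ioi_subset_Ioi hbpos.le)).aestronglyMeasurable
        measurableSet_Ioi
    · rw [ae_restrict_iff' measurableSet_Ioi]
      filter_upwards with s hsb
      have hsb' : b ≤ s := le_of_lt hsb
      have h2 : (2:ℝ) ≤ c * s ^ α := key s hsb'
      have hspos : 0 < s := lt_of_lt_of_le hbpos hsb'
      rw [Real.norm_eq_abs, abs_of_nonneg (Tf_pos _).le]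
      have hcosb : (0:ℝ) < c * s ^ α + Real.cos θ := by
        have := Real.neg_one_le_cos θ
        linarith
      calc Tf θ (c * s ^ α) ≤ Real.sin θ / (c * s ^ α + Real.cos θ) :=
            Tf_le_decay hθ hθπ hcosb
      _ ≤ Real.sin θ / (c * s ^ α / 2) := by
          apply div_le_div_of_nonneg_left hs.le (by linarith) ?_
          have := Real.neg_one_le_cos θ
          linarith
      _ = 2 * Real.sin θ / c * s ^ (-α) := by
          rw [Real.rpow_neg hspos.le]
          field_simp
  have hunion : Set.Ioc (0:ℝ) b ∪ Set.Ioi b = Set.Ioi (0:ℝ) :=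
    Set.Ioc_union_Ioi_eq_Ioi hbpos.le
  rw [← hunion]
  exact hIoc.union hIoi

lemma G_scale (c : ℝ) (hc : 0 < c) :
    ∫ s in Set.Ioi (0:ℝ), Tf θ (c * s ^ α) =
      c ^ (-α⁻¹) * ∫ s in Set.Ioi (0:ℝ), Tf θ (s ^ α) := by
  set b := c ^ (α⁻¹) with hb
  have hbpos : 0 < b := Real.rpow_pos_of_pos hc _
  have hbα : b ^ α = c := by
    rw [hb, ← Real.rpow_mul hc.le, inv_mul_cancel₀ (by linarith : α ≠ 0), Real.rpow_one]
  have h1 : ∫ s in Set.Ioi (0:ℝ), Tf θ (c * s ^ α) =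
      ∫ s in Set.Ioi (0:ℝ), (fun u : ℝ => Tf θ (u ^ α)) (b * s) := by
    apply setIntegral_congr_fun measurableSet_Ioi
    intro s hs
    simp only
    rw [Real.mul_rpow hbpos.le (le_of_lt hs), hbα]
  have h2 := integral_comp_mul_left_Ioi (fun u : ℝ => Tf θ (u ^ α)) 0 hbpos
  rw [mul_zero] at h2
  rw [h1, h2, smul_eq_mul]
  congr 1
  rw [hb, ← Real.rpow_neg_one, ← Real.rpow_mul hc.le]
  norm_num

lemma G_pos : 0 < ∫ s in Set.Ioi (0:ℝ), Tf θ (s ^ α) := by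
  have hint : IntegrableOn (fun s : ℝ => Tf θ (s ^ α)) (Set.Ioi (0:ℝ)) := by
    have := G_integrable hθ hθπ hα 1 one_pos
    simpa using this
  rw [setIntegral_pos_iff_support_of_nonneg_ae ?_ hint]
  · have : Set.Ioi (0:ℝ) ⊆ Function.support (fun s : ℝ => Tf θ (s ^ α)) ∩ Set.Ioi 0 := by
      intro s hs
      exact ⟨ne_of_gt (Tf_pos _), hs⟩
    calc (0:ℝ≥0∞) < volume (Set.Ioi (0:ℝ)) := by simp [Real.volume_Ioi]
    _ ≤ _ := measure_mono this
  · filter_upwards with s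
    exact (Tf_pos _).le

end Tfsec

section SumInt

lemma sum_int_comparison {g : ℝ → ℝ} {a : ℝ} (ha : 0 ≤ a)
    (hanti : AntitoneOn g (Set.Ici a)) (hnn : ∀ s, 0 ≤ g s)
    (hint : IntegrableOn g (Set.Ioi a)) :
    Summable (fun k : ℕ => g (a + k + 1)) ∧
    (∑' k : ℕ, g (a + k + 1)) ≤ (∫ s in Set.Ioi a, g s) ∧
    (∫ s in Set.Ioi (a + 1), g s) ≤ ∑' k : ℕ, g (a + k + 1) := by
  have hnn_ae : (0:ℝ→ℝ) ≤ᵐ[volume.restrict (Set.Ioi a)] g := by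
    filter_upwards with s using hnn s
  have hIocIoi : ∀ n : ℕ, (∫ x in a..(a + n), g x) ≤ ∫ s in Set.Ioi a, g s := by
    intro n
    rw [intervalIntegral.integral_of_le (by linarith [Nat.cast_nonneg (α := ℝ) n])]
    apply setIntegral_mono_set hint hnn_ae
    exact (Set.Ioc_subset_Ioi_self).eventuallyLE
  have hpart : ∀ n : ℕ, (∑ i ∈ Finset.range n, g (a + i + 1)) ≤ ∫ s in Set.Ioi a, g s := by
    intro n
    have h1 : AntitoneOn g (Set.Icc a (a + n)) :=
      hanti.mono (Set.Icc_subset_Ici_self)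
    have h2 := h1.sum_le_integral
    calc (∑ i ∈ Finset.range n, g (a + i + 1))
        = ∑ i ∈ Finset.range n, g (a + ((i:ℕ) + 1 : ℕ)) := by
          apply Finset.sum_congr rfl
          intro i _
          congr 1
          push_cast
          ring
    _ ≤ ∫ x in a..(a + n), g x := h2
    _ ≤ _ := hIocIoi n
  have hsummable : Summable (fun k : ℕ => g (a + k + 1)) :=
    summable_of_sum_range_le (fun n => hnn _) hpart
  refine ⟨hsummable, tsum_le_of_sum_range_le (fun n => hnn _) hpart, ?_⟩
  have htendsto : Tendsto (fun n : ℕ => ∫ x in (a+1)..((a+1) + n), g x) atTop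
      (𝓝 (∫ s in Set.Ioi (a+1), g s)) := by
    apply intervalIntegral_tendsto_integral_Ioi
    · exact hint.mono_set (Set.Ioi_subset_Ioi (by linarith))
    · exact tendsto_atTop_add_const_left atTop (a+1) tendsto_natCast_atTop_atTop
  apply le_of_tendsto htendsto
  filter_upwards with n
  have h1 : AntitoneOn g (Set.Icc (a+1) ((a+1) + n)) :=
    hanti.mono (Set.Icc_subset_Ici_self.trans (Set.Ici_subset_Ici.mpr (by linarith)))
  calc (∫ x in (a+1)..((a+1) + n), g x) ≤ ∑ i ∈ Finset.range n, g ((a+1) + i) :=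
        h1.integral_le_sum
  _ = ∑ i ∈ Finset.range n, g (a + i + 1) := by
      apply Finset.sum_congr rfl
      intro i _
      congr 1
      ring
  _ ≤ ∑' k : ℕ, g (a + k + 1) := Summable.sum_le_tsum _ (fun i _ => hnn _) hsummable

end SumInt

section Main
variable {θ : ℝ} (hθ : 0 < θ) (hθπ : θ < Real.pi) {α : ℝ} (hα : 1 < α)
include hθ hθπ hα

lemma sum_int_facts {d : ℝ} (hd : 0 < d) (N : ℕ) :
    Summable (fun k : ℕ => Tf θ (d * ((N:ℝ) + k + 1) ^ α)) ∧
    (∑' k : ℕ, Tf θ (d * ((N:ℝ) + k + 1) ^ α)) ≤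
      d ^ (-α⁻¹) * ∫ s in Set.Ioi (0:ℝ), Tf θ (s ^ α) ∧
    d ^ (-α⁻¹) * (∫ s in Set.Ioi (0:ℝ), Tf θ (s ^ α)) - ((N:ℝ) + 1) * Real.pi ≤
      ∑' k : ℕ, Tf θ (d * ((N:ℝ) + k + 1) ^ α) := by
  set g := fun s : ℝ => Tf θ (d * s ^ α) with hg
  have hNnn : (0:ℝ) ≤ (N:ℝ) := Nat.cast_nonneg N
  have hanti : AntitoneOn g (Set.Ici (N:ℝ)) :=
    (G_anti hθ hθπ hα d hd).mono (Set.Ici_subset_Ici.mpr hNnn)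
  have hnn : ∀ s, 0 ≤ g s := fun s => (Tf_pos _).le
  have hint0 : IntegrableOn g (Set.Ioi (0:ℝ)) := G_integrable hθ hθπ hα d hd
  have hint : IntegrableOn g (Set.Ioi (N:ℝ)) :=
    hint0.mono_set (Set.Ioi_subset_Ioi hNnn)
  obtain ⟨hsum, hub, hlb⟩ := sum_int_comparison hNnn hanti hnn hint
  have hnn_ae : (0:ℝ→ℝ) ≤ᵐ[volume.restrict (Set.Ioi (0:ℝ))] g := by
    filter_upwards with s using hnn s
  have hIoi0 : (∫ s in Set.Ioi (N:ℝ), g s) ≤ ∫ s in Set.Ioi (0:ℝ), g s :=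
    setIntegral_mono_set hint0 hnn_ae (Set.Ioi_subset_Ioi hNnn).eventuallyLE
  have hscale : (∫ s in Set.Ioi (0:ℝ), g s) =
      d ^ (-α⁻¹) * ∫ s in Set.Ioi (0:ℝ), Tf θ (s ^ α) := G_scale hθ hθπ hα d hd
  refine ⟨hsum, le_trans hub (hscale ▸ hIoi0), ?_⟩
  -- lower bound
  have hsplit : (∫ s in Set.Ioi (0:ℝ), g s) =
      (∫ s in Set.Ioc (0:ℝ) ((N:ℝ)+1), g s) + ∫ s in Set.Ioi ((N:ℝ)+1), g s := by
    rw [← setIntegral_union (Set.Ioc_disjoint_Ioi le_rfl) measurableSet_Ioi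
      (hint0.mono_set Set.Ioc_subset_Ioi_self)
      (hint0.mono_set (Set.Ioi_subset_Ioi (by linarith)))]
    rw [Set.Ioc_union_Ioi_eq_Ioi (by linarith)]
  have hIoc_le : (∫ s in Set.Ioc (0:ℝ) ((N:ℝ)+1), g s) ≤ ((N:ℝ)+1) * Real.pi := by
    have h1 : (∫ s in Set.Ioc (0:ℝ) ((N:ℝ)+1), g s) ≤
        ∫ _ in Set.Ioc (0:ℝ) ((N:ℝ)+1), Real.pi := by
      apply setIntegral_mono_on (hint0.mono_set Set.Ioc_subset_Ioi_self)
        (integrableOn_const (by simp [Real.volume_Ioc]))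
        measurableSet_Ioc
      intro s _
      exact Tf_le_pi _
    rw [setIntegral_const] at h1
    rw [measureReal_def, Real.volume_Ioc] at h1
    calc (∫ s in Set.Ioc (0:ℝ) ((N:ℝ)+1), g s) ≤ _ := h1
    _ ≤ ((N:ℝ)+1) * Real.pi := by
        rw [smul_eq_mul, ENNReal.toReal_ofReal (by linarith)]
        simp
  have : d ^ (-α⁻¹) * (∫ s in Set.Ioi (0:ℝ), Tf θ (s ^ α)) - ((N:ℝ)+1) * Real.pi ≤
      ∫ s in Set.Ioi ((N:ℝ)+1), g s := by
    rw [← hscale]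
    linarith [hsplit, hIoc_le]
  exact le_trans this hlb

end Main

section Main2
variable {θ : ℝ} (hθ : 0 < θ) (hθπ : θ < Real.pi) {α : ℝ} (hα : 1 < α)
include hθ hθπ hα

lemma key_upper {t : ℕ → ℝ} (ht_sum : Summable t) (ht_nonneg : ∀ k, 0 ≤ t k)
    {q d : ℝ} (hq : ∑' k, t k = q) (hd : 0 < d) (N : ℕ)
    (hbd : ∀ k : ℕ, Tf θ (d * ((N:ℝ) + k + 1) ^ α) ≤ t (k + N)) :
    d ^ (-α⁻¹) * (∫ s in Set.Ioi (0:ℝ), Tf θ (s ^ α)) ≤ q + ((N:ℝ) + 1) * Real.pi := by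
  obtain ⟨hsum, _, hlb⟩ := sum_int_facts hθ hθπ hα hd N
  have h1 : (∑' k : ℕ, Tf θ (d * ((N:ℝ) + k + 1) ^ α)) ≤ ∑' k, t (k + N) :=
    Summable.tsum_le_tsum hbd hsum (ht_sum.comp_injective (add_left_injective N))
  have h2 : (∑' k, t (k + N)) ≤ q := by
    rw [← hq, ← Summable.sum_add_tsum_nat_add N ht_sum]
    have : 0 ≤ ∑ i ∈ Finset.range N, t i := Finset.sum_nonneg fun i _ => ht_nonneg i
    linarith
  linarith

lemma key_lower {t : ℕ → ℝ} (ht_sum : Summable t) (ht_le_pi : ∀ k, t k ≤ Real.pi)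
    {q d : ℝ} (hq : ∑' k, t k = q) (hd : 0 < d) (N : ℕ)
    (hbd : ∀ k : ℕ, t (k + N) ≤ Tf θ (d * ((N:ℝ) + k + 1) ^ α)) :
    q ≤ (N:ℝ) * Real.pi + d ^ (-α⁻¹) * ∫ s in Set.Ioi (0:ℝ), Tf θ (s ^ α) := by
  obtain ⟨hsum, hub, _⟩ := sum_int_facts hθ hθπ hα hd N
  have h1 : (∑' k, t (k + N)) ≤ ∑' k : ℕ, Tf θ (d * ((N:ℝ) + k + 1) ^ α) :=
    Summable.tsum_le_tsum hbd (ht_sum.comp_injective (add_left_injective N)) hsum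
  have h2 : q ≤ (N:ℝ) * Real.pi + ∑' k, t (k + N) := by
    rw [← hq, ← Summable.sum_add_tsum_nat_add N ht_sum]
    have : (∑ i ∈ Finset.range N, t i) ≤ (N:ℝ) * Real.pi := by
      calc (∑ i ∈ Finset.range N, t i) ≤ ∑ i ∈ Finset.range N, Real.pi :=
            Finset.sum_le_sum fun i _ => ht_le_pi i
      _ = (N:ℝ) * Real.pi := by simp [mul_comm]
    linarith
  linarith

end Main2

theorem stmt_11 (θ : ℝ) (hθ : 0 < θ) (hθπ : θ < Real.pi)
    (Q : ℕ → ℝ) (hQpos : ∀ k, 1 ≤ k → 0 < Q k)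
    (hQ : (fun k : ℕ => Q k - (k : ℝ)) =O[atTop] fun _ : ℕ => (1 : ℝ))
    (α : ℝ) (hα : 1 < α)
    (X Y : ℕ → ℝ) (hXpos : ∀ k, 1 ≤ k → 0 < X k) (hYpos : ∀ j, 1 ≤ j → 0 < Y j)
    (hX : (fun k : ℕ => Real.log (X k) - α * Real.log k) =O[atTop] fun _ : ℕ => (1 : ℝ))
    (hfix : ∀ j, 1 ≤ j → phi θ X Y j = ENNReal.ofReal (Q j)) :
    Filter.limsup (fun j : ℕ => Real.log (Y j) - α * Real.log j) atTop ≤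
      Filter.limsup (fun k : ℕ => Real.log (X k) - α * Real.log k) atTop -
        α * Real.log (Drift θ α) ∧
    Filter.liminf (fun k : ℕ => Real.log (X k) - α * Real.log k) atTop -
        α * Real.log (Drift θ α) ≤
      Filter.liminf (fun j : ℕ => Real.log (Y j) - α * Real.log j) atTop := by
  have hπ : (0:ℝ) < Real.pi := Real.pi_pos
  set I := ∫ s in Set.Ioi (0:ℝ), Tf θ (s ^ α) with hIdef
  have hI : 0 < I := G_pos hθ hθπ hα
  have hDrift : Drift θ α = I / Real.pi := by
    have hfun : (fun s : ℝ => Theta θ (s ^ α) 1) = fun s : ℝ => Tf θ (s ^ α) := by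
      funext s
      rw [theta_eq_s11 hθ hθπ one_pos, div_one]
    rw [Drift, hfun, ← hIdef]
    ring
  have hlogD : α * Real.log (Drift θ α) = α * (Real.log I - Real.log Real.pi) := by
    rw [hDrift, Real.log_div hI.ne' hπ.ne']
  -- the fixed point equation in real form
  have hfix' : ∀ j, 1 ≤ j → Summable (fun k : ℕ => Tf θ (X (k+1) / Y j)) ∧
      (∑' k : ℕ, Tf θ (X (k+1) / Y j)) = Real.pi * Q j := by
    intro j hj
    have hy := hYpos j hj
    have h0 := hfix j hj
    rw [phi] at h0
    have hterm : ∀ k : ℕ, Theta θ (X (k+1)) (Y j) = Tf θ (X (k+1) / Y j) :=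
      fun k => theta_eq_s11 hθ hθπ hy
    simp only [hterm] at h0
    have hπinv : ENNReal.ofReal Real.pi * ENNReal.ofReal (1 / Real.pi) = 1 := by
      rw [← ENNReal.ofReal_mul hπ.le, mul_one_div_cancel hπ.ne']
      exact ENNReal.ofReal_one
    have hSval : (∑' k : ℕ, ENNReal.ofReal (Tf θ (X (k+1) / Y j))) =
        ENNReal.ofReal (Real.pi * Q j) := by
      have h2 := congrArg (fun z => ENNReal.ofReal Real.pi * z) h0
      rw [← mul_assoc, hπinv, one_mul, ← ENNReal.ofReal_mul hπ.le] at h2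
      exact h2
    have hSne : (∑' k : ℕ, ENNReal.ofReal (Tf θ (X (k+1) / Y j))) ≠ ⊤ := by
      rw [hSval]; exact ENNReal.ofReal_ne_top
    have hsumm : Summable (fun k : ℕ => Tf θ (X (k+1) / Y j)) := by
      refine (ENNReal.summable_toReal hSne).congr fun k => ?_
      exact ENNReal.toReal_ofReal (Tf_pos _).le
    refine ⟨hsumm, ?_⟩
    have h1 := ENNReal.ofReal_tsum_of_nonneg (fun k : ℕ => (Tf_pos (θ := θ) _).le) hsumm
    rw [hSval] at h1
    have hQj := hQpos j hj
    exact (ENNReal.ofReal_eq_ofReal_iff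
      (tsum_nonneg fun k => (Tf_pos _).le) (by positivity)).mp h1
  -- boundedness of the X sequence
  obtain ⟨C, hC⟩ := Asymptotics.isBigO_iff.mp hX
  simp only [norm_one, mul_one, Real.norm_eq_abs] at hC
  have hXub : IsBoundedUnder (· ≤ ·) atTop
      (fun k : ℕ => Real.log (X k) - α * Real.log k) := by
    refine ⟨C, eventually_map.mpr ?_⟩
    filter_upwards [hC] with k hk
    exact le_trans (le_abs_self _) hk
  have hXlb : IsBoundedUnder (· ≥ ·) atTop
      (fun k : ℕ => Real.log (X k) - α * Real.log k) := by
    refine ⟨-C, eventually_map.mpr ?_⟩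
    filter_upwards [hC] with k hk
    have := neg_abs_le (Real.log (X k) - α * Real.log k)
    simp only [ge_iff_le]
    linarith
  set Ls := Filter.limsup (fun k : ℕ => Real.log (X k) - α * Real.log k) atTop with hLs
  set Li := Filter.liminf (fun k : ℕ => Real.log (X k) - α * Real.log k) atTop with hLi
  -- Q tends to infinity like j
  obtain ⟨CQ, hCQ⟩ := Asymptotics.isBigO_iff.mp hQ
  simp only [norm_one, mul_one, Real.norm_eq_abs] at hCQ
  have hQtend : ∀ b : ℝ, Tendsto (fun j : ℕ => α * Real.log ((Q j + b) / j)) atTop (𝓝 0) := by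
    intro b
    have h1 : Tendsto (fun j : ℕ => (Q j - j + b) * (1 / (j:ℝ))) atTop (𝓝 0) := by
      have hg : Tendsto (fun j : ℕ => (CQ + |b|) * (1 / (j:ℝ))) atTop (𝓝 0) := by
        simpa using tendsto_one_div_atTop_nhds_zero_nat.const_mul (CQ + |b|)
      apply squeeze_zero_norm' ?_ hg
      · filter_upwards [hCQ, eventually_ge_atTop 1] with j hj hj1
        have hjpos : (0:ℝ) < j := by exact_mod_cast hj1
        rw [norm_mul, Real.norm_eq_abs, Real.norm_eq_abs,
          abs_of_pos (by positivity : (0:ℝ) < 1/(j:ℝ))]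
        have h2 : |Q j - j + b| ≤ CQ + |b| := (abs_add_le _ _).trans (by gcongr)
        gcongr
    have h0 : Tendsto (fun j : ℕ => (Q j + b) / (j:ℝ)) atTop (𝓝 1) := by
      have h2 : ∀ᶠ j : ℕ in atTop, 1 + (Q j - j + b) * (1 / (j:ℝ)) = (Q j + b) / (j:ℝ) := by
        filter_upwards [eventually_ge_atTop 1] with j hj1
        have hjpos : (0:ℝ) < j := by exact_mod_cast hj1
        field_simp
        ring
      have h3 : Tendsto (fun j : ℕ => 1 + (Q j - j + b) * (1 / (j:ℝ))) atTop (𝓝 1) := by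
        have h4 := tendsto_const_nhds (x := (1:ℝ)) (f := atTop (α := ℕ))
        simpa using h4.add h1
      exact Tendsto.congr' h2 h3
    have h4 : Tendsto (fun j : ℕ => Real.log ((Q j + b) / j)) atTop (𝓝 0) := by
      have h5 := (Real.continuousAt_log one_ne_zero).tendsto.comp h0
      simpa [Function.comp_def] using h5
    simpa using h4.const_mul α
  -- upper eventual bound
  have claim_up : ∀ ε : ℝ, 0 < ε → ∀ᶠ j : ℕ in atTop,
      Real.log (Y j) - α * Real.log j ≤ Ls - α * Real.log (Drift θ α) + ε := by
    intro ε hε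
    have hev : ∀ᶠ k : ℕ in atTop, Real.log (X k) - α * Real.log k < Ls + ε/2 :=
      eventually_lt_of_limsup_lt (by rw [← hLs]; linarith) hXub
    obtain ⟨M₀, hM₀⟩ := eventually_atTop.mp hev
    set M := max M₀ 1 with hM
    set C₁ := Real.exp (Ls + ε/2) with hC₁def
    have hC₁ : 0 < C₁ := Real.exp_pos _
    have hXle : ∀ k : ℕ, M ≤ k → X k ≤ C₁ * (k:ℝ) ^ α := by
      intro k hk
      have hk1 : 1 ≤ k := le_trans (le_max_right _ _) hk
      have hkpos : (0:ℝ) < k := by exact_mod_cast hk1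
      have h1 := hM₀ k (le_trans (le_max_left _ _) hk)
      have h2 : Real.log (X k) ≤ Ls + ε/2 + α * Real.log k := by linarith
      calc X k = Real.exp (Real.log (X k)) := (Real.exp_log (hXpos k hk1)).symm
      _ ≤ Real.exp (Ls + ε/2 + α * Real.log k) := Real.exp_le_exp.mpr h2
      _ = C₁ * (k:ℝ) ^ α := by
          rw [Real.exp_add, hC₁def, Real.rpow_def_of_pos hkpos, mul_comm (Real.log _) α]
    have hlogQ := (NormedAddCommGroup.tendsto_nhds_zero.mp (hQtend ((M:ℝ)+1)))
      (ε/2) (by linarith)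
    filter_upwards [hlogQ, eventually_ge_atTop 1] with j hlog hj1
    have hy := hYpos j hj1
    have hjpos : (0:ℝ) < j := by exact_mod_cast hj1
    obtain ⟨hsumm, htsum⟩ := hfix' j hj1
    set d := C₁ / Y j with hddef
    have hd : 0 < d := by positivity
    have hbd : ∀ k : ℕ, Tf θ (d * ((M:ℝ) + k + 1) ^ α) ≤
        (fun k : ℕ => Tf θ (X (k+1) / Y j)) (k + M) := by
      intro k
      simp only
      have hidx : M ≤ k + M + 1 := by omega
      have hXb := hXle (k + M + 1) hidx
      have hcast : ((k + M + 1 : ℕ) : ℝ) = (M:ℝ) + k + 1 := by push_cast; ring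
      rw [hcast] at hXb
      apply Tf_antitone hθ hθπ
      have h1 : X (k + M + 1) / Y j ≤ (C₁ * ((M:ℝ) + k + 1) ^ α) / Y j := by gcongr
      calc X (k + M + 1) / Y j ≤ (C₁ * ((M:ℝ) + k + 1) ^ α) / Y j := h1
      _ = d * ((M:ℝ) + k + 1) ^ α := by rw [hddef]; ring
    have hkey := key_upper hθ hθπ hα hsumm (fun k => (Tf_pos _).le) htsum hd M hbd
    have hdinv : d ^ (-α⁻¹) = (Y j / C₁) ^ (α⁻¹) := by
      rw [show Y j / C₁ = d⁻¹ by rw [hddef, inv_div], Real.inv_rpow hd.le,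
        ← Real.rpow_neg hd.le]
    have hQj := hQpos j hj1
    have hQb : (0:ℝ) < Q j + ((M:ℝ)+1) := by positivity
    set Z := Real.pi * (Q j + ((M:ℝ)+1)) / I with hZdef
    have hZpos : 0 < Z := by rw [hZdef]; positivity
    have hstep : (Y j / C₁) ^ (α⁻¹) ≤ Z := by
      rw [← hdinv, hZdef, le_div_iff₀ hI]
      calc d ^ (-α⁻¹) * I ≤ Real.pi * Q j + ((M:ℝ)+1) * Real.pi := hkey
      _ = Real.pi * (Q j + ((M:ℝ)+1)) := by ring
    have hYC : (0:ℝ) ≤ Y j / C₁ := by positivity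
    have hYle : Y j ≤ C₁ * Z ^ α := by
      have h1 : ((Y j / C₁) ^ (α⁻¹)) ^ α ≤ Z ^ α :=
        Real.rpow_le_rpow (Real.rpow_nonneg hYC _) hstep (by linarith)
      rw [← Real.rpow_mul hYC, inv_mul_cancel₀ (by linarith : α ≠ 0), Real.rpow_one] at h1
      rw [div_le_iff₀ hC₁] at h1
      calc Y j ≤ Z ^ α * C₁ := h1
      _ = C₁ * Z ^ α := by ring
    have hZrpow : (0:ℝ) < Z ^ α := Real.rpow_pos_of_pos hZpos _
    have hlogY : Real.log (Y j) ≤ Real.log C₁ + α * Real.log Z := by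
      have h2 : Real.log (Y j) ≤ Real.log (C₁ * Z ^ α) := Real.log_le_log hy hYle
      rwa [Real.log_mul hC₁.ne' hZrpow.ne', Real.log_rpow hZpos] at h2
    have hlogZ : Real.log Z = Real.log Real.pi + Real.log (Q j + ((M:ℝ)+1)) - Real.log I := by
      rw [hZdef, Real.log_div (by positivity) hI.ne', Real.log_mul hπ.ne' hQb.ne']
    have hlogC₁ : Real.log C₁ = Ls + ε/2 := Real.log_exp _
    have hsplit : α * Real.log ((Q j + ((M:ℝ)+1)) / j) =
        α * Real.log (Q j + ((M:ℝ)+1)) - α * Real.log j := by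
      rw [Real.log_div hQb.ne' hjpos.ne']
      ring
    have habs : α * Real.log ((Q j + ((M:ℝ)+1)) / j) ≤ ε/2 := by
      rw [Real.norm_eq_abs] at hlog
      exact le_trans (le_abs_self _) hlog.le
    have hmul : α * Real.log Z =
        α * Real.log Real.pi + α * Real.log (Q j + ((M:ℝ)+1)) - α * Real.log I := by
      rw [hlogZ]; ring
    have hlogD' : α * Real.log (Drift θ α) = α * Real.log I - α * Real.log Real.pi := by
      rw [hlogD]; ring
    linarith [hlogY, hlogC₁, hsplit, habs, hmul, hlogD']
  -- lower eventual bound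
  have claim_lo : ∀ ε : ℝ, 0 < ε → ∀ᶠ j : ℕ in atTop,
      Li - α * Real.log (Drift θ α) - ε ≤ Real.log (Y j) - α * Real.log j := by
    intro ε hε
    have hev : ∀ᶠ k : ℕ in atTop, Li - ε/2 < Real.log (X k) - α * Real.log k :=
      eventually_lt_of_lt_liminf (by rw [← hLi]; linarith) hXlb
    obtain ⟨M₀, hM₀⟩ := eventually_atTop.mp hev
    set M := max M₀ 1 with hM
    set c₁ := Real.exp (Li - ε/2) with hc₁def
    have hc₁ : 0 < c₁ := Real.exp_pos _
    have hXge : ∀ k : ℕ, M ≤ k → c₁ * (k:ℝ) ^ α ≤ X k := by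
      intro k hk
      have hk1 : 1 ≤ k := le_trans (le_max_right _ _) hk
      have hkpos : (0:ℝ) < k := by exact_mod_cast hk1
      have h1 := hM₀ k (le_trans (le_max_left _ _) hk)
      have h2 : Li - ε/2 + α * Real.log k ≤ Real.log (X k) := by linarith
      calc c₁ * (k:ℝ) ^ α = Real.exp (Li - ε/2 + α * Real.log k) := by
            rw [Real.exp_add, hc₁def, Real.rpow_def_of_pos hkpos, mul_comm (Real.log _) α]
      _ ≤ Real.exp (Real.log (X k)) := Real.exp_le_exp.mpr h2
      _ = X k := Real.exp_log (hXpos k hk1)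
    have hlogQ := (NormedAddCommGroup.tendsto_nhds_zero.mp (hQtend (-(M:ℝ))))
      (ε/2) (by linarith)
    have hQbig : ∀ᶠ j : ℕ in atTop, (M:ℝ) < Q j := by
      have hcast : Tendsto (fun j : ℕ => (j:ℝ)) atTop atTop := tendsto_natCast_atTop_atTop
      filter_upwards [hCQ, hcast.eventually_gt_atTop ((M:ℝ) + CQ)] with j hj hj2
      have : Q j - j ≥ -CQ := by
        have := neg_abs_le (Q j - (j:ℝ))
        linarith
      linarith
    filter_upwards [hlogQ, hQbig, eventually_ge_atTop 1] with j hlog hQM hj1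
    have hy := hYpos j hj1
    have hjpos : (0:ℝ) < j := by exact_mod_cast hj1
    obtain ⟨hsumm, htsum⟩ := hfix' j hj1
    set d := c₁ / Y j with hddef
    have hd : 0 < d := by positivity
    have hbd : ∀ k : ℕ, (fun k : ℕ => Tf θ (X (k+1) / Y j)) (k + M) ≤
        Tf θ (d * ((M:ℝ) + k + 1) ^ α) := by
      intro k
      simp only
      have hidx : M ≤ k + M + 1 := by omega
      have hXb := hXge (k + M + 1) hidx
      have hcast : ((k + M + 1 : ℕ) : ℝ) = (M:ℝ) + k + 1 := by push_cast; ring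
      rw [hcast] at hXb
      apply Tf_antitone hθ hθπ
      have h1 : (c₁ * ((M:ℝ) + k + 1) ^ α) / Y j ≤ X (k + M + 1) / Y j := by gcongr
      calc d * ((M:ℝ) + k + 1) ^ α = (c₁ * ((M:ℝ) + k + 1) ^ α) / Y j := by rw [hddef]; ring
      _ ≤ X (k + M + 1) / Y j := h1
    have hkey := key_lower hθ hθπ hα hsumm (fun k => Tf_le_pi _) htsum hd M hbd
    have hdinv : d ^ (-α⁻¹) = (Y j / c₁) ^ (α⁻¹) := by
      rw [show Y j / c₁ = d⁻¹ by rw [hddef, inv_div], Real.inv_rpow hd.le,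
        ← Real.rpow_neg hd.le]
    have hQb : (0:ℝ) < Q j + (-(M:ℝ)) := by linarith
    set Z := Real.pi * (Q j + (-(M:ℝ))) / I with hZdef
    have hZpos : 0 < Z := by rw [hZdef]; positivity
    have hstep : Z ≤ (Y j / c₁) ^ (α⁻¹) := by
      rw [← hdinv, hZdef, div_le_iff₀ hI]
      have : Real.pi * Q j ≤ (M:ℝ) * Real.pi + d ^ (-α⁻¹) * I := hkey
      nlinarith
    have hYC : (0:ℝ) ≤ Y j / c₁ := by positivity
    have hYge : c₁ * Z ^ α ≤ Y j := by
      have h1 : Z ^ α ≤ ((Y j / c₁) ^ (α⁻¹)) ^ α :=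
        Real.rpow_le_rpow hZpos.le hstep (by linarith)
      rw [← Real.rpow_mul hYC, inv_mul_cancel₀ (by linarith : α ≠ 0), Real.rpow_one] at h1
      rw [le_div_iff₀ hc₁] at h1
      calc c₁ * Z ^ α = Z ^ α * c₁ := by ring
      _ ≤ Y j := h1
    have hZrpow : (0:ℝ) < Z ^ α := Real.rpow_pos_of_pos hZpos _
    have hlogY : Real.log c₁ + α * Real.log Z ≤ Real.log (Y j) := by
      have h2 : Real.log (c₁ * Z ^ α) ≤ Real.log (Y j) :=
        Real.log_le_log (by positivity) hYge
      rwa [Real.log_mul hc₁.ne' hZrpow.ne', Real.log_rpow hZpos] at h2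
    have hlogZ : Real.log Z = Real.log Real.pi + Real.log (Q j + (-(M:ℝ))) - Real.log I := by
      rw [hZdef, Real.log_div (by positivity) hI.ne', Real.log_mul hπ.ne' hQb.ne']
    have hlogc₁ : Real.log c₁ = Li - ε/2 := Real.log_exp _
    have hsplit : α * Real.log ((Q j + (-(M:ℝ))) / j) =
        α * Real.log (Q j + (-(M:ℝ))) - α * Real.log j := by
      rw [Real.log_div hQb.ne' hjpos.ne']
      ring
    have habs : -(ε/2) ≤ α * Real.log ((Q j + (-(M:ℝ))) / j) := by
      have h3 : |α * Real.log ((Q j + (-(M:ℝ))) / j)| < ε/2 := by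
        rwa [Real.norm_eq_abs] at hlog
      have h4 := neg_abs_le (α * Real.log ((Q j + (-(M:ℝ))) / j))
      linarith
    have hmul : α * Real.log Z =
        α * Real.log Real.pi + α * Real.log (Q j + (-(M:ℝ))) - α * Real.log I := by
      rw [hlogZ]; ring
    have hlogD' : α * Real.log (Drift θ α) = α * Real.log I - α * Real.log Real.pi := by
      rw [hlogD]; ring
    linarith [hlogY, hlogc₁, hsplit, habs, hmul, hlogD']
  -- conclusion
  have hYub : IsBoundedUnder (· ≤ ·) atTop
      (fun j : ℕ => Real.log (Y j) - α * Real.log j) :=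
    ⟨Ls - α * Real.log (Drift θ α) + 1, eventually_map.mpr (claim_up 1 one_pos)⟩
  have hYlb : IsBoundedUnder (· ≥ ·) atTop
      (fun j : ℕ => Real.log (Y j) - α * Real.log j) :=
    ⟨Li - α * Real.log (Drift θ α) - 1, eventually_map.mpr (claim_lo 1 one_pos)⟩
  have hup : ∀ ε : ℝ, 0 < ε →
      Filter.limsup (fun j : ℕ => Real.log (Y j) - α * Real.log j) atTop ≤
        Ls - α * Real.log (Drift θ α) + ε :=
    fun ε hε => limsup_le_of_le hYlb.isCoboundedUnder_le (claim_up ε hε)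
  have hlo : ∀ ε : ℝ, 0 < ε →
      Li - α * Real.log (Drift θ α) - ε ≤
        Filter.liminf (fun j : ℕ => Real.log (Y j) - α * Real.log j) atTop :=
    fun ε hε => le_liminf_of_le hYub.isCoboundedUnder_ge (claim_lo ε hε)
  constructor
  · by_contra hcon
    push_neg at hcon
    set L := Filter.limsup (fun j : ℕ => Real.log (Y j) - α * Real.log j) atTop
    have h1 := hup ((L - (Ls - α * Real.log (Drift θ α)))/2) (by linarith)
    linarith
  · by_contra hcon
    push_neg at hcon
    set L := Filter.liminf (fun j : ℕ => Real.log (Y j) - α * Real.log j) atTop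
    have h1 := hlo (((Li - α * Real.log (Drift θ α)) - L)/2) (by linarith)
    linarith
end

section
/- For every sequence X of positive reals and every k ≥ 1, Σ_{j=1}^{k} φ_j(X,X) > θ·k²/(2π). Consequently, if there exists k ≥ 1 with Σ_{j=1}^{k} Q_j ≤ θ·k²/(2π), then there is no sequence X of positive reals with φ_j(X,X) = Q_j for all j ≥ 1. -/
open Filter Asymptotics MeasureTheory
open scoped ENNReal Topology

lemma theta_im {θ a b : ℝ} :
    ((a : ℂ) + (b : ℂ) * Complex.exp (θ * Complex.I)).im = b * Real.sin θ := by
  simp [Complex.exp_mul_I, Complex.add_im, Complex.mul_im, ← Complex.ofReal_cos,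
    ← Complex.ofReal_sin]

lemma theta_pos_s19 {θ a b : ℝ} (hθ : 0 < θ) (hθπ : θ < Real.pi) (ha : 0 < a) (hb : 0 < b) :
    0 < Theta θ a b := by
  have him : 0 < ((a : ℂ) + (b : ℂ) * Complex.exp (θ * Complex.I)).im := by
    rw [theta_im]
    exact mul_pos hb (Real.sin_pos_of_pos_of_lt_pi hθ hθπ)
  have h0 : 0 ≤ Theta θ a b := Complex.arg_nonneg_iff.2 him.le
  rcases h0.lt_or_eq with h | h
  · exact h
  · exfalso
    have := (Complex.arg_eq_zero_iff.1 h.symm).2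
    rw [theta_im] at this
    exact him.ne' (by rw [theta_im, this])

lemma theta_lt_pi {θ a b : ℝ} (hθ : 0 < θ) (hθπ : θ < Real.pi) (ha : 0 < a) (hb : 0 < b) :
    Theta θ a b < Real.pi := by
  have him : 0 < ((a : ℂ) + (b : ℂ) * Complex.exp (θ * Complex.I)).im := by
    rw [theta_im]
    exact mul_pos hb (Real.sin_pos_of_pos_of_lt_pi hθ hθπ)
  refine lt_of_le_of_ne (Complex.arg_le_pi _) fun h => ?_
  have := (Complex.arg_eq_pi_iff.1 h).2
  exact him.ne' this

lemma theta_add {θ a b : ℝ} (hθ : 0 < θ) (hθπ : θ < Real.pi) (ha : 0 < a) (hb : 0 < b) :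
    Theta θ a b + Theta θ b a = θ := by
  set z : ℂ := (a : ℂ) + (b : ℂ) * Complex.exp (θ * Complex.I) with hzdef
  have him : 0 < z.im := by
    rw [hzdef, theta_im]
    exact mul_pos hb (Real.sin_pos_of_pos_of_lt_pi hθ hθπ)
  have hz0 : z ≠ 0 := fun h => by simp [h] at him
  have hargpos : 0 < Complex.arg z := theta_pos_s19 hθ hθπ ha hb
  have harglt : Complex.arg z < Real.pi := theta_lt_pi hθ hθπ ha hb
  -- b + a e^{iθ} = e^{iθ} * conj z
  have hconj : ((‖z‖ : ℝ) : ℂ) * Complex.exp (-(Complex.arg z) * Complex.I)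
      = (starRingEnd ℂ) z := by
    have := congrArg (starRingEnd ℂ) (Complex.norm_mul_exp_arg_mul_I z)
    rw [map_mul, ← Complex.exp_conj] at this
    simpa [Complex.conj_ofReal, map_mul, Complex.conj_I, neg_mul, mul_neg] using this
  have hkey : (b : ℂ) + (a : ℂ) * Complex.exp (θ * Complex.I)
      = (‖z‖ : ℝ) * (Complex.cos ((θ - Complex.arg z : ℝ) : ℂ)
          + Complex.sin ((θ - Complex.arg z : ℝ) : ℂ) * Complex.I) := by
    rw [← Complex.exp_mul_I]
    have h2 : Complex.exp (((θ - Complex.arg z : ℝ) : ℂ) * Complex.I)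
        = Complex.exp (θ * Complex.I) * Complex.exp (-(Complex.arg z) * Complex.I) := by
      rw [← Complex.exp_add]; push_cast; ring_nf
    rw [h2, ← mul_assoc, mul_comm ((‖z‖ : ℝ) : ℂ) (Complex.exp (θ * Complex.I)),
      mul_assoc, hconj]
    rw [hzdef]
    simp only [map_add, map_mul, Complex.conj_ofReal, ← Complex.exp_conj, Complex.conj_I,
      mul_neg]
    have hexp : Complex.exp (-((θ : ℂ) * Complex.I)) * Complex.exp ((θ : ℂ) * Complex.I) = 1 := by
      rw [← Complex.exp_add]; simp
    symm
    calc Complex.exp ((θ:ℂ) * Complex.I) * ((a:ℂ) + (b:ℂ) * Complex.exp (-((θ:ℂ) * Complex.I)))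
        = (a:ℂ) * Complex.exp ((θ:ℂ) * Complex.I)
          + (b:ℂ) * (Complex.exp (-((θ:ℂ) * Complex.I)) * Complex.exp ((θ:ℂ) * Complex.I)) := by
          ring
      _ = (b:ℂ) + (a:ℂ) * Complex.exp ((θ:ℂ) * Complex.I) := by rw [hexp]; ring
  have hmem : θ - Complex.arg z ∈ Set.Ioc (-Real.pi) Real.pi := by
    constructor
    · linarith
    · linarith
  have : Theta θ b a = θ - Complex.arg z := by
    unfold Theta
    rw [hkey]
    exact Complex.arg_mul_cos_add_sin_mul_I (norm_pos_iff.mpr hz0) hmem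
  unfold Theta
  rw [show Complex.arg ((b:ℂ) + (a:ℂ) * Complex.exp (θ * Complex.I)) = Theta θ b a from rfl, this]
  ring

theorem stmt_19 (θ : ℝ) (hθ : 0 < θ) (hθπ : θ < Real.pi)
    (Q : ℕ → ℝ) (hQpos : ∀ k, 1 ≤ k → 0 < Q k) :
    (∀ X : ℕ → ℝ, (∀ k, 1 ≤ k → 0 < X k) → ∀ k : ℕ, 1 ≤ k →
      ENNReal.ofReal (θ * (k : ℝ) ^ 2 / (2 * Real.pi)) <
        ∑ j ∈ Finset.range k, phi θ X X (j + 1)) ∧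
    ((∃ k : ℕ, 1 ≤ k ∧ ∑ j ∈ Finset.range k, Q (j + 1) ≤ θ * (k : ℝ) ^ 2 / (2 * Real.pi)) →
      ¬ ∃ X : ℕ → ℝ, (∀ k, 1 ≤ k → 0 < X k) ∧
        ∀ j, 1 ≤ j → phi θ X X j = ENNReal.ofReal (Q j)) := by
  have hπ : (0:ℝ) < Real.pi := Real.pi_pos
  have part1 : ∀ X : ℕ → ℝ, (∀ k, 1 ≤ k → 0 < X k) → ∀ k : ℕ, 1 ≤ k →
      ENNReal.ofReal (θ * (k : ℝ) ^ 2 / (2 * Real.pi)) <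
        ∑ j ∈ Finset.range k, phi θ X X (j + 1) := by
    intro X hX k hk
    set f : ℕ → ℕ → ℝ := fun j m => Theta θ (X (m + 1)) (X (j + 1)) with hf
    have hfpos : ∀ j m : ℕ, 0 < f j m := fun j m =>
      theta_pos_s19 hθ hθπ (hX _ (Nat.le_add_left 1 m)) (hX _ (Nat.le_add_left 1 j))
    -- the real double sum
    set S : ℝ := ∑ j ∈ Finset.range k, ∑ m ∈ Finset.range k, f j m with hS
    have hSval : S = θ * (k:ℝ)^2 / 2 := by
      have hsum : S + S = θ * (k:ℝ)^2 := by
        rw [hS]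
        nth_rewrite 2 [Finset.sum_comm]
        calc (∑ j ∈ Finset.range k, ∑ m ∈ Finset.range k, f j m)
              + ∑ m ∈ Finset.range k, ∑ j ∈ Finset.range k, f j m
            = ∑ j ∈ Finset.range k, (∑ m ∈ Finset.range k, f j m
                + ∑ m ∈ Finset.range k, f m j) := Finset.sum_add_distrib.symm
          _ = ∑ j ∈ Finset.range k, ∑ m ∈ Finset.range k, (f j m + f m j) :=
              Finset.sum_congr rfl fun j _ => Finset.sum_add_distrib.symm
          _ = ∑ j ∈ Finset.range k, ∑ m ∈ Finset.range k, θ := by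
              refine Finset.sum_congr rfl fun j _ => Finset.sum_congr rfl fun m _ => ?_
              exact theta_add hθ hθπ (hX _ (Nat.le_add_left 1 m)) (hX _ (Nat.le_add_left 1 j))
          _ = θ * (k:ℝ)^2 := by
              simp [Finset.sum_const, Finset.card_range]; ring
      linarith
    -- ENNReal manipulations
    set c : ℝ≥0∞ := ENNReal.ofReal (1 / Real.pi) with hc
    have hc0 : c ≠ 0 := by
      rw [hc]; simp [ENNReal.ofReal_eq_zero, not_le, one_div, inv_pos, hπ]
    have hctop : c ≠ ⊤ := ENNReal.ofReal_ne_top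
    have hphisum : ∑ j ∈ Finset.range k, phi θ X X (j + 1)
        = c * ∑ j ∈ Finset.range k, ∑' m : ℕ, ENNReal.ofReal (f j m) := by
      rw [Finset.mul_sum]
      rfl
    have hofS : ENNReal.ofReal S
        = ∑ j ∈ Finset.range k, ∑ m ∈ Finset.range k, ENNReal.ofReal (f j m) := by
      rw [hS, ENNReal.ofReal_sum_of_nonneg fun j _ => Finset.sum_nonneg fun m _ => (hfpos j m).le]
      exact Finset.sum_congr rfl fun j _ =>
        ENNReal.ofReal_sum_of_nonneg fun m _ => (hfpos j m).le
    have hlt : ENNReal.ofReal S < ∑ j ∈ Finset.range k, ∑' m : ℕ, ENNReal.ofReal (f j m) := by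
      have hstep : ∀ j ∈ Finset.range k,
          ∑ m ∈ Finset.range (k+1), ENNReal.ofReal (f j m) ≤ ∑' m : ℕ, ENNReal.ofReal (f j m) :=
        fun j _ => ENNReal.sum_le_tsum _
      have hA : ∑ j ∈ Finset.range k, ∑ m ∈ Finset.range (k+1), ENNReal.ofReal (f j m)
          = ENNReal.ofReal S + ∑ j ∈ Finset.range k, ENNReal.ofReal (f j k) := by
        rw [hofS, ← Finset.sum_add_distrib]
        exact Finset.sum_congr rfl fun j _ => by rw [Finset.sum_range_succ]
      have hE : 0 < ∑ j ∈ Finset.range k, ENNReal.ofReal (f j k) := by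
        have hle := Finset.single_le_sum (f := fun j => ENNReal.ofReal (f j k))
          (fun i _ => zero_le) (Finset.mem_range.2 (by omega : (0:ℕ) < k))
        exact lt_of_lt_of_le (ENNReal.ofReal_pos.2 (hfpos 0 k)) hle
      calc ENNReal.ofReal S
          < ENNReal.ofReal S + ∑ j ∈ Finset.range k, ENNReal.ofReal (f j k) :=
            ENNReal.lt_add_right ENNReal.ofReal_ne_top hE.ne'
        _ = ∑ j ∈ Finset.range k, ∑ m ∈ Finset.range (k+1), ENNReal.ofReal (f j m) := hA.symm
        _ ≤ ∑ j ∈ Finset.range k, ∑' m : ℕ, ENNReal.ofReal (f j m) :=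
            Finset.sum_le_sum hstep
    have hcS : ENNReal.ofReal (θ * (k : ℝ) ^ 2 / (2 * Real.pi)) = c * ENNReal.ofReal S := by
      rw [hc, ← ENNReal.ofReal_mul (by positivity), hSval]
      congr 1
      field_simp
    rw [hcS, hphisum]
    exact (ENNReal.mul_lt_mul_iff_right hc0 hctop).2 hlt
  refine ⟨part1, ?_⟩
  rintro ⟨k, hk1, hkle⟩ ⟨X, hXpos, hphi⟩
  have h1 := part1 X hXpos k hk1
  have h2 : ∑ j ∈ Finset.range k, phi θ X X (j + 1)
      = ENNReal.ofReal (∑ j ∈ Finset.range k, Q (j + 1)) := by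
    rw [ENNReal.ofReal_sum_of_nonneg fun j _ => (hQpos _ (Nat.le_add_left 1 j)).le]
    exact Finset.sum_congr rfl fun j _ => hphi (j + 1) (Nat.le_add_left 1 j)
  rw [h2] at h1
  exact absurd (ENNReal.ofReal_le_ofReal hkle) (not_le.2 h1)
end
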